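/- arXiv:1411.4097 — 3 statements merged into one kernel-verified Lean document; each statement's English description precedes it below -/
import Mathlib

section
/- For the DRB game on the k-dimensional grid, there exists n0 ∈ ℕ (depending only on k and the granularity γ) such that for all n ≥ n0: for every node u, the strategy r_u = 0 is the unique best response of u to the uniform zero profile r_{-u} ≡ 0, i.e., π_u(0, r_{-u}≡0) > π_u(s', r_{-u}≡0) for every s' ∈ Σ with s' > 0. -/
open Finset

noncomputable section

namespace DRB

/-- Nodes of the `k`-dimensional grid (torus) with side length `n`. -/
abbrev Node (n k : ℕ) := Fin k → Fin n

/-- Grid (Manhattan) distance on the torus: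
`d_M(u,v) = Σ_i min(|u_i - v_i|, n - |u_i - v_i|)`. -/
def dM (n k : ℕ) (u v : Node n k) : ℕ :=
  ∑ i, min ((u i : ℤ) - (v i : ℤ)).natAbs (n - ((u i : ℤ) - (v i : ℤ)).natAbs)

/-- All nodes different from `u`. -/
def others (n k : ℕ) (u : Node n k) : Finset (Node n k) :=
  Finset.univ.filter (fun v => v ≠ u)

/-- Normalization constant `c(s) = Σ_{v ≠ u} d_M(u,v)^{-s}` for node `u`. -/
def cnorm (n k : ℕ) (u : Node n k) (s : ℝ) : ℝ :=
  ∑ v ∈ others n k u, (dM n k u v : ℝ) ^ (-s)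

/-- Long-range link probability `p_u(v, s) = d_M(u,v)^{-s} / c(s)`. -/
def linkProb (n k : ℕ) (u v : Node n k) (s : ℝ) : ℝ :=
  (dM n k u v : ℝ) ^ (-s) / cnorm n k u s

/-- Link distance `D(s) = Σ_{v ≠ u} p_u(v,s) · d_M(u,v)` of node `u`. -/
def linkDist (n k : ℕ) (u : Node n k) (s : ℝ) : ℝ :=
  ∑ v ∈ others n k u, linkProb n k u v s * (dM n k u v : ℝ)

/-- Reciprocity `P_u(r) = Σ_{v ≠ u} p_u(v, r_u) · p_v(u, r_v)`. -/
def recip (n k : ℕ) (r : Node n k → ℝ) (u : Node n k) : ℝ :=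
  ∑ v ∈ others n k u, linkProb n k u v (r u) * linkProb n k v u (r v)

/-- DRB payoff `π_u(r) = D(r_u) · P_u(r)`. -/
def payoff (n k : ℕ) (r : Node n k → ℝ) (u : Node n k) : ℝ :=
  linkDist n k u (r u) * recip n k r u

/-- Membership in the strategy set `Σ = {0, γ, 2γ, 3γ, ...}`. -/
def InSigma (γ s : ℝ) : Prop := ∃ m : ℕ, s = m * γ

/-- A valid strategy profile (every coordinate lies in `Σ`). -/
def ValidProfile (n k : ℕ) (γ : ℝ) (r : Node n k → ℝ) : Prop :=
  ∀ u, InSigma γ (r u)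

/-- Nash equilibrium of the DRB game with strategy set `Σ` of granularity `γ`. -/
def IsNash (n k : ℕ) (γ : ℝ) (r : Node n k → ℝ) : Prop :=
  ∀ u : Node n k, ∀ s : ℝ, InSigma γ s →
    payoff n k r u ≥ payoff n k (Function.update r u s) u

/-- Strict Nash equilibrium. -/
def IsStrictNash (n k : ℕ) (γ : ℝ) (r : Node n k → ℝ) : Prop :=
  ∀ u : Node n k, ∀ s : ℝ, InSigma γ s → s ≠ r u →
    payoff n k r u > payoff n k (Function.update r u s) u

/-- `t`-strong Nash equilibrium: no coalition of size ≤ `t` has a weakly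
improving joint deviation that strictly improves some member. -/
def IsTStrongNash (n k : ℕ) (γ : ℝ) (t : ℕ) (r : Node n k → ℝ) : Prop :=
  ¬ ∃ (C : Finset (Node n k)) (s : Node n k → ℝ),
      C.Nonempty ∧ C.card ≤ t ∧ (∀ u ∈ C, InSigma γ (s u)) ∧
      (∀ u ∈ C,
        payoff n k (fun v => if v ∈ C then s v else r v) u ≥ payoff n k r u) ∧
      (∃ u ∈ C,
        payoff n k (fun v => if v ∈ C then s v else r v) u > payoff n k r u)

/-- Strong Nash equilibrium: coalitions of any size. -/
def IsStrongNash (n k : ℕ) (γ : ℝ) (r : Node n k → ℝ) : Prop :=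
  ¬ ∃ (C : Finset (Node n k)) (s : Node n k → ℝ),
      C.Nonempty ∧ (∀ u ∈ C, InSigma γ (s u)) ∧
      (∀ u ∈ C,
        payoff n k (fun v => if v ∈ C then s v else r v) u ≥ payoff n k r u) ∧
      (∃ u ∈ C,
        payoff n k (fun v => if v ∈ C then s v else r v) u > payoff n k r u)

/-- `b_u(j)`: the number of nodes at grid distance exactly `j` from `u`. -/
def countAt (n k : ℕ) (u : Node n k) (j : ℕ) : ℕ :=
  (Finset.univ.filter (fun v => v ≠ u ∧ dM n k u v = j)).card

/-- One asynchronous best-response step: a single node switches to a best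
response to the current profile, all other strategies unchanged. -/
def BRStep (n k : ℕ) (γ : ℝ) (r r' : Node n k → ℝ) : Prop :=
  ∃ (u : Node n k) (s : ℝ), InSigma γ s ∧
    (∀ t : ℝ, InSigma γ t →
      payoff n k (Function.update r u s) u ≥ payoff n k (Function.update r u t) u) ∧
    r' = Function.update r u s

/-- One synchronous best-response step: every node simultaneously switches
to a best response to the current profile `r`. -/
def SyncStep (n k : ℕ) (γ : ℝ) (r r' : Node n k → ℝ) : Prop :=
  ∀ u : Node n k, InSigma γ (r' u) ∧
    ∀ t : ℝ, InSigma γ t →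
      payoff n k (Function.update r u (r' u)) u ≥
        payoff n k (Function.update r u t) u

end DRB


section AuxLemmas

open DRB

lemma mem_others_iff {n k : ℕ} {u v : Node n k} : v ∈ others n k u ↔ v ≠ u := by
  simp [others]

lemma dM_pos {n k : ℕ} {u v : Node n k} (h : v ≠ u) : 0 < dM n k u v := by
  obtain ⟨i, hi⟩ := Function.ne_iff.mp h
  have hterm : 1 ≤ min ((u i : ℤ) - (v i : ℤ)).natAbs (n - ((u i : ℤ) - (v i : ℤ)).natAbs) := by
    have h1 : (u i : ℕ) < n := (u i).isLt
    have h2 : (v i : ℕ) < n := (v i).isLt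
    have h3 : (u i : ℕ) ≠ (v i : ℕ) := fun e => hi (Fin.ext e.symm)
    omega
  have : 1 ≤ dM n k u v := by
    refine le_trans hterm ?_
    exact Finset.single_le_sum (f := fun i =>
      min ((u i : ℤ) - (v i : ℤ)).natAbs (n - ((u i : ℤ) - (v i : ℤ)).natAbs))
      (fun _ _ => Nat.zero_le _) (Finset.mem_univ i)
  omega

lemma exists_at_dist {n k : ℕ} (hk : 1 ≤ k) (c : ℕ) (hc : 1 ≤ c) (hcn : 2 * c ≤ n)
    (u : Node n k) : ∃ v : Node n k, v ≠ u ∧ dM n k u v = c := by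
  have hcn' : c < n := by omega
  set i0 : Fin k := ⟨0, hk⟩ with hi0
  set v : Node n k := Function.update u i0 (u i0 + ⟨c, hcn'⟩) with hv
  have hval : ((v i0 : ℕ)) = ((u i0 : ℕ) + c) % n := by
    rw [hv, Function.update_self, Fin.val_add]
  have hmod : ((u i0 : ℕ) + c) % n = (u i0 : ℕ) + c ∨
      (((u i0 : ℕ) + c) % n = (u i0 : ℕ) + c - n ∧ n ≤ (u i0 : ℕ) + c) := by
    rcases Nat.lt_or_ge ((u i0 : ℕ) + c) n with h | h
    · exact Or.inl (Nat.mod_eq_of_lt h)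
    · refine Or.inr ⟨?_, h⟩
      rw [Nat.mod_eq_sub_mod h, Nat.mod_eq_of_lt (by have := (u i0).isLt; omega)]
  have hne : v ≠ u := by
    intro h
    have h2 : (v i0 : ℕ) = (u i0 : ℕ) := by rw [h]
    have h3 := (u i0).isLt
    omega
  refine ⟨v, hne, ?_⟩
  unfold dM
  rw [Finset.sum_eq_single i0]
  · have h3 := (u i0).isLt
    rcases hmod with h | ⟨h, h'⟩ <;> omega
  · intro i _ hi
    have : v i = u i := Function.update_of_ne hi _ _
    rw [this]
    simp
  · intro h; exact absurd (Finset.mem_univ i0) h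

lemma chebyshev_strict {α : Type*} {S : Finset α} (a b : α → ℝ)
    (h : ∀ v ∈ S, ∀ w ∈ S, (a v - a w) * (b v - b w) ≤ 0)
    {v0 w0 : α} (hv0 : v0 ∈ S) (hw0 : w0 ∈ S)
    (hst : (a v0 - a w0) * (b v0 - b w0) < 0) :
    (S.card : ℝ) * ∑ v ∈ S, a v * b v < (∑ v ∈ S, a v) * (∑ v ∈ S, b v) := by
  have key : ∑ p ∈ S ×ˢ S, (a p.1 - a p.2) * (b p.1 - b p.2) < 0 := by
    have h1 : ∑ p ∈ S ×ˢ S, (a p.1 - a p.2) * (b p.1 - b p.2) <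
        ∑ _p ∈ S ×ˢ S, (0 : ℝ) := by
      refine Finset.sum_lt_sum (fun p hp => ?_) ⟨(v0, w0), ?_, hst⟩
      · obtain ⟨hp1, hp2⟩ := Finset.mem_product.mp hp
        exact h _ hp1 _ hp2
      · exact Finset.mem_product.mpr ⟨hv0, hw0⟩
    simpa using h1
  have expand : ∑ p ∈ S ×ˢ S, (a p.1 - a p.2) * (b p.1 - b p.2)
      = 2 * ((S.card : ℝ) * ∑ v ∈ S, a v * b v)
        - 2 * ((∑ v ∈ S, a v) * (∑ v ∈ S, b v)) := by
    have inner : ∀ v ∈ S, ∑ w ∈ S, (a v - a w) * (b v - b w)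
        = (S.card : ℝ) * (a v * b v) - a v * (∑ w ∈ S, b w)
          - (∑ w ∈ S, a w) * b v + ∑ w ∈ S, a w * b w := by
      intro v _
      have e : ∀ w, (a v - a w) * (b v - b w)
          = a v * b v - a v * b w - a w * b v + a w * b w := fun w => by ring
      simp only [e, Finset.sum_add_distrib, Finset.sum_sub_distrib, Finset.sum_const,
        nsmul_eq_mul, ← Finset.mul_sum, ← Finset.sum_mul]
    rw [Finset.sum_product, Finset.sum_congr rfl inner]
    simp only [Finset.sum_add_distrib, Finset.sum_sub_distrib, Finset.sum_const,
      nsmul_eq_mul, ← Finset.mul_sum, ← Finset.sum_mul]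
    ring
  linarith

lemma card_others_eq {n k : ℕ} (v w : Node n k) :
    (others n k v).card = (others n k w).card := by
  have h : ∀ x : Node n k, (others n k x).card = Fintype.card (Node n k) - 1 := by
    intro x
    have : others n k x = Finset.univ.erase x := by
      ext y; simp [others, Finset.mem_erase]
    rw [this, Finset.card_erase_of_mem (Finset.mem_univ x), Finset.card_univ]
  rw [h v, h w]

lemma cnorm_pos {n k : ℕ} {u : Node n k} (hne : (others n k u).Nonempty) (s : ℝ) :
    0 < cnorm n k u s := by
  refine Finset.sum_pos (fun v hv => ?_) hne
  have := dM_pos (mem_others_iff.mp hv)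
  exact Real.rpow_pos_of_pos (by exact_mod_cast this) _

lemma cnorm_zero {n k : ℕ} (v : Node n k) :
    cnorm n k v 0 = ((others n k v).card : ℝ) := by
  simp [cnorm]

lemma sum_linkProb {n k : ℕ} {u : Node n k} (hne : (others n k u).Nonempty) (s : ℝ) :
    ∑ v ∈ others n k u, linkProb n k u v s = 1 := by
  unfold linkProb
  rw [← Finset.sum_div]
  exact div_self (cnorm_pos hne s).ne'

lemma recip_update {n k : ℕ} {u : Node n k} (hne : (others n k u).Nonempty) (s : ℝ) :
    recip n k (Function.update (fun _ => (0 : ℝ)) u s) u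
      = 1 / ((others n k u).card : ℝ) := by
  unfold recip
  have hcalc : ∀ v ∈ others n k u,
      linkProb n k u v (Function.update (fun _ => (0 : ℝ)) u s u) *
        linkProb n k v u (Function.update (fun _ => (0 : ℝ)) u s v)
      = linkProb n k u v s * (1 / ((others n k u).card : ℝ)) := by
    intro v hv
    have hvne := mem_others_iff.mp hv
    rw [Function.update_self, Function.update_of_ne hvne]
    congr 1
    unfold linkProb
    rw [neg_zero, Real.rpow_zero, cnorm_zero, card_others_eq v u]
  rw [Finset.sum_congr rfl hcalc, ← Finset.sum_mul, sum_linkProb hne, one_mul]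

lemma linkDist_zero {n k : ℕ} (u : Node n k) :
    linkDist n k u 0 = (∑ v ∈ others n k u, (dM n k u v : ℝ)) / ((others n k u).card : ℝ) := by
  unfold linkDist linkProb
  rw [cnorm_zero, Finset.sum_div]
  refine Finset.sum_congr rfl (fun v _ => ?_)
  rw [neg_zero, Real.rpow_zero]
  ring

theorem payoff_update_eq {n k : ℕ} {u : Node n k} (hne : (others n k u).Nonempty) (s : ℝ) :
    payoff n k (Function.update (fun _ => (0 : ℝ)) u s) u
      = linkDist n k u s * (1 / ((others n k u).card : ℝ)) := by
  unfold payoff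
  rw [recip_update hne s, Function.update_self]

end AuxLemmas

/-- For the DRB game on the `k`-dimensional grid there exists `n0`
(depending only on `k` and `γ = 1/g`) such that for all `n ≥ n0`, for every node
`u`, the strategy `0` is the unique best response of `u` to the uniform zero
profile `r_{-u} ≡ 0`. -/
theorem zero_unique_best_response_to_uniform_zero (k g : ℕ) (hk : 1 ≤ k) (hg : 2 ≤ g) :
    ∃ n0 : ℕ, ∀ n : ℕ, n0 ≤ n →
      ∀ u : DRB.Node n k,
        ∀ s' : ℝ, DRB.InSigma (g : ℝ)⁻¹ s' → 0 < s' →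
          DRB.payoff n k (Function.update (fun _ => (0 : ℝ)) u (0 : ℝ)) u >
            DRB.payoff n k (Function.update (fun _ => (0 : ℝ)) u s') u := by
  refine ⟨5, fun n hn u s' _ hs' => ?_⟩
  obtain ⟨v0, hv0ne, hv0d⟩ := exists_at_dist hk 1 le_rfl (by omega) u
  obtain ⟨w0, hw0ne, hw0d⟩ := exists_at_dist hk 2 (by omega) (by omega) u
  have hne : (DRB.others n k u).Nonempty := ⟨v0, mem_others_iff.mpr hv0ne⟩
  rw [payoff_update_eq hne, payoff_update_eq hne]
  have hcard : (0 : ℝ) < ((DRB.others n k u).card : ℝ) := by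
    exact_mod_cast Finset.card_pos.mpr hne
  have hmain : DRB.linkDist n k u s' < DRB.linkDist n k u 0 := by
    rw [linkDist_zero]
    have hD : DRB.linkDist n k u s'
        = (∑ v ∈ DRB.others n k u,
            (DRB.dM n k u v : ℝ) ^ (-s') * (DRB.dM n k u v : ℝ)) / DRB.cnorm n k u s' := by
      unfold DRB.linkDist DRB.linkProb
      rw [Finset.sum_div]
      exact Finset.sum_congr rfl (fun v _ => by ring)
    rw [hD, div_lt_div_iff₀ (cnorm_pos hne s') hcard]
    have hcheb := chebyshev_strict (S := DRB.others n k u)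
      (fun v => (DRB.dM n k u v : ℝ)) (fun v => (DRB.dM n k u v : ℝ) ^ (-s'))
      (fun v hv w hw => ?_) (mem_others_iff.mpr hv0ne) (mem_others_iff.mpr hw0ne) ?_
    · have hsum : ∑ v ∈ DRB.others n k u, (DRB.dM n k u v : ℝ) ^ (-s') * (DRB.dM n k u v : ℝ)
          = ∑ v ∈ DRB.others n k u, (DRB.dM n k u v : ℝ) * (DRB.dM n k u v : ℝ) ^ (-s') :=
        Finset.sum_congr rfl (fun v _ => mul_comm _ _)
      have hcn : DRB.cnorm n k u s'
          = ∑ v ∈ DRB.others n k u, (DRB.dM n k u v : ℝ) ^ (-s') := rfl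
      rw [hsum, hcn]
      linarith [hcheb]
    · -- pairwise nonpositivity
      have hdv : (0 : ℝ) < (DRB.dM n k u v : ℝ) := by
        exact_mod_cast dM_pos (mem_others_iff.mp hv)
      have hdw : (0 : ℝ) < (DRB.dM n k u w : ℝ) := by
        exact_mod_cast dM_pos (mem_others_iff.mp hw)
      have hs'n : (-s' : ℝ) ≤ 0 := by linarith
      rcases le_total ((DRB.dM n k u v : ℝ)) ((DRB.dM n k u w : ℝ)) with h | h
      · have hb := Real.rpow_le_rpow_of_nonpos hdv h hs'n
        nlinarith [hb, h]
      · have hb := Real.rpow_le_rpow_of_nonpos hdw h hs'n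
        nlinarith [hb, h]
    · -- strictness at the witness pair
      have e1 : ((DRB.dM n k u v0 : ℕ) : ℝ) = 1 := by rw [hv0d]; norm_num
      have e2 : ((DRB.dM n k u w0 : ℕ) : ℝ) = 2 := by rw [hw0d]; norm_num
      simp only [e1, e2, Real.one_rpow]
      have h2 : (2 : ℝ) ^ (-s') < 1 :=
        Real.rpow_lt_one_of_one_lt_of_neg one_lt_two (by linarith)
      nlinarith [h2]
  have h1 : (0 : ℝ) < 1 / ((DRB.others n k u).card : ℝ) := by positivity
  exact mul_lt_mul_of_pos_right hmain h1
end
end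

section
/- For the DRB game on the k-dimensional grid, there exists n0 ∈ ℕ (depending only on k and the granularity γ) such that for all n ≥ n0: for every strategy profile r and every node u with r_u ≠ k, the payoff of u in r is strictly smaller than the payoff of u in the navigable profile r ≡ k; consequently, the navigable profile r ≡ k is a strong Nash equilibrium (in particular it is Pareto-optimal). -/
open Finset

noncomputable section

namespace DRB

lemma mem_others {n k : ℕ} {u v : Node n k} : v ∈ others n k u ↔ v ≠ u := by simp [others]

lemma dM_comm (n k : ℕ) (u v : Node n k) : dM n k u v = dM n k v u := by
  unfold dM
  refine Finset.sum_congr rfl fun i _ => ?_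
  rw [← Int.natAbs_neg, neg_sub]

lemma coord_le (n : ℕ) (a b : Fin n) :
    min ((a : ℤ) - (b : ℤ)).natAbs (n - ((a : ℤ) - (b : ℤ)).natAbs) ≤ n / 2 := by
  have ha := a.isLt
  have hb := b.isLt
  have h1 : ((a : ℤ) - (b : ℤ)).natAbs ≤ n - 1 := by omega
  omega

lemma one_le_dM {n k : ℕ} {u v : Node n k} (h : v ≠ u) : 1 ≤ dM n k u v := by
  have : ∃ i, u i ≠ v i := by
    by_contra hc
    push_neg at hc
    exact h (funext fun i => (hc i).symm)
  obtain ⟨i, hi⟩ := this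
  have hne : ((u i : ℤ) - (v i : ℤ)).natAbs ≠ 0 := by
    intro h0
    apply hi
    have := Int.natAbs_eq_zero.mp h0
    have : (u i : ℤ) = (v i : ℤ) := by omega
    exact Fin.ext (by exact_mod_cast this)
  have ha := (u i).isLt
  have hb := (v i).isLt
  have h1 : ((u i : ℤ) - (v i : ℤ)).natAbs ≤ n - 1 := by omega
  have hterm : 1 ≤ min ((u i : ℤ) - (v i : ℤ)).natAbs (n - ((u i : ℤ) - (v i : ℤ)).natAbs) := by
    omega
  calc 1 ≤ _ := hterm
  _ ≤ dM n k u v := Finset.single_le_sum (f := fun i => min ((u i : ℤ) - (v i : ℤ)).natAbs (n - ((u i : ℤ) - (v i : ℤ)).natAbs)) (fun _ _ => Nat.zero_le _) (Finset.mem_univ i)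

lemma dM_le (n k : ℕ) (u v : Node n k) : dM n k u v ≤ k * (n / 2) := by
  calc dM n k u v ≤ ∑ _i : Fin k, n / 2 := Finset.sum_le_sum fun i _ => coord_le n (u i) (v i)
  _ = k * (n / 2) := by simp [mul_comm]
lemma coord_add (n : ℕ) (a b : Fin n) :
    min ((a : ℤ) - ((a + b : Fin n) : ℤ)).natAbs (n - ((a : ℤ) - ((a + b : Fin n) : ℤ)).natAbs)
      = min b.val (n - b.val) := by
  have hab : ((a + b : Fin n) : ℕ) = (a.val + b.val) % n := by simp [Fin.add_def]
  have ha := a.isLt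
  have hb := b.isLt
  rcases Nat.lt_or_ge (a.val + b.val) n with h | h
  · rw [hab, Nat.mod_eq_of_lt h]; push_cast; omega
  · have h2 : (a.val + b.val) % n = a.val + b.val - n := by
      rw [Nat.mod_eq_sub_mod h, Nat.mod_eq_of_lt (by omega)]
    rw [hab, h2]
    push_cast [Nat.cast_sub (by omega : n ≤ a.val + b.val)]
    omega
lemma dM_add (n k : ℕ) (u : Node n k) (e : Node n k) :
    dM n k u (u + e) = ∑ i, min (e i).val (n - (e i).val) := by
  unfold dM
  exact Finset.sum_congr rfl fun i _ => coord_add n (u i) (e i)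

lemma dM_eq_sub (n k : ℕ) [NeZero n] (u v : Node n k) :
    dM n k u v = ∑ i, min ((v i - u i : Fin n)).val (n - ((v i - u i : Fin n)).val) := by
  have h : v = u + (v - u) := by abel
  calc dM n k u v = dM n k u (u + (v - u)) := by rw [← h]
  _ = _ := dM_add n k u (v - u)

/-- lower bound on ball cardinality via box embedding -/
lemma ball_lower (n k : ℕ) (m : ℕ) (hm : 2 * m + 1 ≤ n) (v : Node n k) :
    (2 * m + 1) ^ k - 1 ≤
      ((others n k v).filter (fun w => dM n k v w ≤ k * m)).card := by
  haveI : NeZero n := ⟨by omega⟩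
  -- code from Fin (2m+1) to Fin n
  have hc : ∀ j : Fin (2 * m + 1), (if j.val ≤ m then j.val else n - (j.val - m)) < n := by
    intro j; have := j.isLt; split <;> omega
  set c : Fin (2 * m + 1) → Fin n := fun j => ⟨_, hc j⟩ with hcdef
  have hcmin : ∀ j : Fin (2 * m + 1), min (c j).val (n - (c j).val) ≤ m := by
    intro j; have := j.isLt; simp only [hcdef]; split <;> omega
  have hczero : ∀ j : Fin (2 * m + 1), c j = 0 ↔ j = 0 := by
    intro j
    have := j.isLt
    rw [Fin.ext_iff, Fin.ext_iff]
    simp only [Fin.val_zero, hcdef]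
    constructor
    · intro hv; split at hv <;> omega
    · intro hv; simp [hv]
  have hcinj : Function.Injective c := by
    intro j j' h
    have hv : (c j).val = (c j').val := by rw [h]
    have := j.isLt; have := j'.isLt
    simp only [hcdef] at hv
    apply Fin.ext
    split at hv <;> split at hv <;> omega
  -- the map
  set Φ : (Fin k → Fin (2 * m + 1)) → Node n k := fun e => v + fun i => c (e i) with hΦ
  have hΦinj : Function.Injective Φ := by
    intro e e' h
    funext i
    have : (Φ e) i = (Φ e') i := by rw [h]
    simp only [hΦ, Pi.add_apply] at this
    exact hcinj (add_left_cancel this)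
  have hmaps : ∀ e ∈ (Finset.univ.erase (0 : Fin k → Fin (2 * m + 1))),
      Φ e ∈ (others n k v).filter (fun w => dM n k v w ≤ k * m) := by
    intro e he
    rw [Finset.mem_erase] at he
    rw [Finset.mem_filter]
    constructor
    · rw [mem_others]
      intro hew
      apply he.1
      have : (fun i => c (e i)) = (0 : Node n k) := by
        have h0 : v + (fun i => c (e i)) = v + 0 := by simpa [hΦ] using hew
        exact add_left_cancel h0
      funext i
      have : c (e i) = 0 := congrFun this i
      exact (hczero (e i)).mp this
    · have : dM n k v (Φ e) = ∑ i, min (c (e i)).val (n - (c (e i)).val) := dM_add n k v _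
      rw [this]
      calc (∑ i, min (c (e i)).val (n - (c (e i)).val)) ≤ ∑ _i : Fin k, m :=
            Finset.sum_le_sum fun i _ => hcmin (e i)
      _ = k * m := by simp [mul_comm]
  calc (2 * m + 1) ^ k - 1
      = (Finset.univ.erase (0 : Fin k → Fin (2 * m + 1))).card := by
        rw [Finset.card_erase_of_mem (Finset.mem_univ _), Finset.card_univ]
        simp
  _ ≤ _ := Finset.card_le_card_of_injOn Φ hmaps (Function.Injective.injOn hΦinj)

/-- upper bound on ball cardinality -/
lemma ball_upper (n k : ℕ) (u : Node n k) (d : ℕ) (hn : 0 < n) :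
    ((others n k u).filter (fun v => dM n k u v ≤ d)).card ≤ (2 * d + 1) ^ k := by
  haveI : NeZero n := ⟨by omega⟩
  rcases Nat.lt_or_ge n (2 * d + 2) with h | h
  · calc ((others n k u).filter (fun v => dM n k u v ≤ d)).card
        ≤ (Finset.univ : Finset (Node n k)).card := Finset.card_le_card (by
          intro x hx; exact Finset.mem_univ x)
    _ = n ^ k := by rw [Finset.card_univ]; simp
    _ ≤ (2 * d + 1) ^ k := Nat.pow_le_pow_left (by omega) k
  · -- injective coding
    set code : ℕ → ℕ := fun b => if b ≤ d then b else if n - b ≤ d then d + (n - b) else 2 * d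
      with hcode
    have hcodelt : ∀ b, code b < 2 * d + 1 := by
      intro b; simp only [hcode]; split
      · omega
      · split <;> omega
    set Φ : Node n k → (Fin k → Fin (2 * d + 1)) :=
      fun v => fun i => ⟨code ((v i - u i : Fin n)).val, hcodelt _⟩ with hΦ
    have key : ∀ v ∈ (others n k u).filter (fun v => dM n k u v ≤ d), ∀ i,
        min ((v i - u i : Fin n)).val (n - ((v i - u i : Fin n)).val) ≤ d := by
      intro v hv i
      rw [Finset.mem_filter] at hv
      have hd := hv.2
      rw [dM_eq_sub] at hd
      calc min ((v i - u i : Fin n)).val (n - ((v i - u i : Fin n)).val)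
          ≤ ∑ j, min ((v j - u j : Fin n)).val (n - ((v j - u j : Fin n)).val) :=
            Finset.single_le_sum (f := fun j => min ((v j - u j : Fin n)).val (n - ((v j - u j : Fin n)).val)) (fun _ _ => Nat.zero_le _) (Finset.mem_univ i)
      _ ≤ d := hd
    calc ((others n k u).filter (fun v => dM n k u v ≤ d)).card
        ≤ (Finset.univ : Finset (Fin k → Fin (2 * d + 1))).card := ?_
      _ = (2 * d + 1) ^ k := by rw [Finset.card_univ]; simp
    apply Finset.card_le_card_of_injOn Φ (fun _ _ => Finset.mem_univ _)
    intro v hv w hw hvw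
    have : v - u = w - u := by
      funext i
      have h1 := key v hv i
      have h2 := key w hw i
      have : (Φ v) i = (Φ w) i := by rw [hvw]
      have hval : code ((v i - u i : Fin n)).val = code ((w i - u i : Fin n)).val := by
        simpa [hΦ, Fin.ext_iff] using this
      have hb1 := (v i - u i : Fin n).isLt
      have hb2 := (w i - u i : Fin n).isLt
      apply Fin.ext
      simp only [hcode] at hval
      simp only [Pi.sub_apply]
      split_ifs at hval <;> omega
    have := congrArg (· + u) this
    simpa using this

lemma dM_self (n k : ℕ) (u : Node n k) : dM n k u u = 0 := by simp [dM]

lemma exists_neighbor {n k : ℕ} (hn : 2 ≤ n) (hk : 1 ≤ k) (u : Node n k) :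
    ∃ w, w ∈ others n k u ∧ dM n k u w = 1 := by
  have h1 : (1 : ℕ) < n := by omega
  set i0 : Fin k := ⟨0, hk⟩
  set e0 : Node n k := fun i => if i = i0 then (⟨1, h1⟩ : Fin n) else ⟨0, by omega⟩ with he0
  have hdm : dM n k u (u + e0) = 1 := by
    rw [dM_add]
    have hterm : ∀ i, min (e0 i).val (n - (e0 i).val) = if i = i0 then 1 else 0 := by
      intro i
      by_cases h : i = i0 <;> simp [he0, h] <;> omega
    rw [Finset.sum_congr rfl (fun i _ => hterm i), Finset.sum_ite_eq' Finset.univ i0 (fun _ => 1)]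
    simp
  refine ⟨u + e0, ?_, hdm⟩
  rw [mem_others]
  intro hw
  rw [hw, dM_self] at hdm
  exact absurd hdm (by norm_num)


lemma one_le_cnorm {n k : ℕ} (hn : 2 ≤ n) (hk : 1 ≤ k) (u : Node n k) (s : ℝ) :
    1 ≤ cnorm n k u s := by
  obtain ⟨w, hw, hd⟩ := exists_neighbor hn hk u
  calc (1:ℝ) = (dM n k u w : ℝ) ^ (-s) := by rw [hd]; simp
  _ ≤ cnorm n k u s :=
    Finset.single_le_sum (f := fun v => (dM n k u v : ℝ) ^ (-s))
      (fun v _ => Real.rpow_nonneg (Nat.cast_nonneg _) _) hw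

lemma cnorm_pos {n k : ℕ} (hn : 2 ≤ n) (hk : 1 ≤ k) (u : Node n k) (s : ℝ) :
    0 < cnorm n k u s := lt_of_lt_of_le one_pos (one_le_cnorm hn hk u s)

lemma card_others (n k : ℕ) (u : Node n k) : (others n k u).card = n ^ k - 1 := by
  unfold others
  rw [Finset.filter_ne', Finset.card_erase_of_mem (Finset.mem_univ u), Finset.card_univ]
  simp

lemma cnorm_ge_N {n k : ℕ} (hn : 2 ≤ n) (hk : 1 ≤ k) (u : Node n k) (s : ℝ) (hs : 0 ≤ s) :
    ((n ^ k - 1 : ℕ) : ℝ) * ((k * (n / 2) : ℕ) : ℝ) ^ (-s) ≤ cnorm n k u s := by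
  have h : ∀ v ∈ others n k u,
      ((k * (n / 2) : ℕ) : ℝ) ^ (-s) ≤ (dM n k u v : ℝ) ^ (-s) := by
    intro v hv
    have h1 : (0:ℝ) < (dM n k u v : ℝ) := by
      exact_mod_cast one_le_dM (mem_others.mp hv)
    refine Real.rpow_le_rpow_of_nonpos h1 ?_ (by linarith)
    exact_mod_cast dM_le n k u v
  calc ((n ^ k - 1 : ℕ) : ℝ) * ((k * (n / 2) : ℕ) : ℝ) ^ (-s)
      = (others n k u).card • (((k * (n / 2) : ℕ) : ℝ) ^ (-s)) := by
        rw [card_others, nsmul_eq_mul]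
  _ ≤ ∑ v ∈ others n k u, (dM n k u v : ℝ) ^ (-s) := Finset.card_nsmul_le_sum _ _ _ h
  _ = cnorm n k u s := rfl

/-- master dyadic decomposition bound -/
lemma dyadic {n k : ℕ} (hn : 2 ≤ n) (hk : 1 ≤ k) (u : Node n k) (f g : ℕ → ℝ)
    (hg : ∀ j, 0 ≤ g j)
    (hfg : ∀ j d, 2 ^ j ≤ d → d < 2 ^ (j + 1) → f d ≤ g j) :
    ∑ v ∈ others n k u, f (dM n k u v) ≤
      ∑ j ∈ Finset.range (Nat.log 2 (k * (n / 2)) + 1), (2:ℝ) ^ ((j + 2) * k) * g j := by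
  set J := Nat.log 2 (k * (n / 2)) with hJ
  have hmaps : ∀ v ∈ others n k u, Nat.log 2 (dM n k u v) ∈ Finset.range (J + 1) := by
    intro v hv
    rw [Finset.mem_range, Nat.lt_succ_iff, hJ]
    exact Nat.log_mono_right (dM_le n k u v)
  rw [← Finset.sum_fiberwise_of_maps_to hmaps (fun v => f (dM n k u v))]
  apply Finset.sum_le_sum
  intro j _
  have hfibsub : (others n k u).filter (fun v => Nat.log 2 (dM n k u v) = j) ⊆
      (others n k u).filter (fun v => dM n k u v ≤ 2 ^ (j + 1) - 1) := by
    intro v hv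
    rw [Finset.mem_filter] at hv ⊢
    refine ⟨hv.1, ?_⟩
    have h2 := Nat.lt_pow_succ_log_self (by norm_num : 1 < 2) (dM n k u v)
    obtain ⟨-, hv2⟩ := hv
    rw [hv2] at h2
    omega
  have hcard : ((others n k u).filter (fun v => Nat.log 2 (dM n k u v) = j)).card
      ≤ 2 ^ ((j + 2) * k) := by
    calc _ ≤ ((others n k u).filter (fun v => dM n k u v ≤ 2 ^ (j + 1) - 1)).card :=
          Finset.card_le_card hfibsub
    _ ≤ (2 * (2 ^ (j + 1) - 1) + 1) ^ k := ball_upper n k u _ (by omega)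
    _ ≤ (2 ^ (j + 2)) ^ k := Nat.pow_le_pow_left (by
          have : 1 ≤ 2 ^ (j+1) := Nat.one_le_two_pow
          have : 2 ^ (j + 2) = 2 * 2 ^ (j+1) := by ring
          omega) k
    _ = 2 ^ ((j + 2) * k) := by rw [← pow_mul, mul_comm (j+2) k, mul_comm k (j+2)]
  calc ∑ v ∈ (others n k u).filter (fun v => Nat.log 2 (dM n k u v) = j), f (dM n k u v)
      ≤ ((others n k u).filter (fun v => Nat.log 2 (dM n k u v) = j)).card • g j := by
        apply Finset.sum_le_card_nsmul
        intro v hv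
        rw [Finset.mem_filter] at hv
        have hd1 : 1 ≤ dM n k u v := one_le_dM (mem_others.mp hv.1)
        have h2j : 2 ^ j ≤ dM n k u v := by
          rw [← hv.2]; exact Nat.pow_log_le_self 2 (by omega)
        have h2j' : dM n k u v < 2 ^ (j + 1) := by
          rw [← hv.2]; exact Nat.lt_pow_succ_log_self (by norm_num) _
        exact hfg j _ h2j h2j'
  _ ≤ (2:ℝ) ^ ((j + 2) * k) * g j := by
        rw [nsmul_eq_mul]
        apply mul_le_mul_of_nonneg_right _ (hg j)
        exact_mod_cast hcard


lemma two_pow_le_ND {n k : ℕ} (hn : 2 ≤ n) (hk : 1 ≤ k) {j : ℕ}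
    (hj : j ∈ Finset.range (Nat.log 2 (k * (n / 2)) + 1)) :
    (2:ℝ) ^ j ≤ ((k * (n / 2) : ℕ) : ℝ) := by
  rw [Finset.mem_range, Nat.lt_succ_iff] at hj
  have h1 : (2:ℕ) ^ j ≤ 2 ^ (Nat.log 2 (k * (n / 2))) := Nat.pow_le_pow_right (by norm_num) hj
  have h2 : (2:ℕ) ^ (Nat.log 2 (k * (n / 2))) ≤ k * (n / 2) :=
    Nat.pow_log_le_self 2 (by
      have h3 : 1 ≤ n / 2 := by omega
      have := Nat.mul_pos hk h3
      omega)
  exact_mod_cast le_trans h1 h2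

lemma ND_pos {n k : ℕ} (hn : 2 ≤ n) (hk : 1 ≤ k) : 0 < k * (n / 2) := by
  have h3 : 1 ≤ n / 2 := by omega
  exact Nat.mul_pos hk h3

lemma one_le_cast_dM {n k : ℕ} {u v : Node n k} (h : v ∈ others n k u) :
    (1:ℝ) ≤ (dM n k u v : ℝ) := by exact_mod_cast one_le_dM (mem_others.mp h)

lemma sum_T1 {n k : ℕ} (hn : 2 ≤ n) (hk : 1 ≤ k) (u : Node n k) (s : ℝ) (hs : 0 ≤ s) :
    ∑ v ∈ others n k u, (dM n k u v : ℝ) ^ (-(s + (k:ℝ))) ≤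
      ((Nat.log 2 (k * (n / 2)) : ℝ) + 1) * 4 ^ k := by
  have hdy := dyadic hn hk u (fun d => (d : ℝ) ^ (-(s + (k:ℝ))))
    (fun j => ((2:ℝ) ^ (j * k))⁻¹)
    (fun j => by positivity)
    (by
      intro j d h1 h2
      have hd1 : (1:ℝ) ≤ (d:ℝ) := by
        have : (1:ℕ) ≤ d := le_trans Nat.one_le_two_pow h1
        exact_mod_cast this
      have h2j : (2:ℝ) ^ j ≤ (d:ℝ) := by exact_mod_cast h1
      calc (d:ℝ) ^ (-(s + (k:ℝ))) ≤ (d:ℝ) ^ (-(k:ℝ)) :=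
            Real.rpow_le_rpow_of_exponent_le hd1 (by linarith)
      _ ≤ ((2:ℝ) ^ j) ^ (-(k:ℝ)) :=
            Real.rpow_le_rpow_of_nonpos (by positivity) h2j
              (neg_nonpos.mpr (Nat.cast_nonneg k))
      _ = ((2:ℝ) ^ (j * k))⁻¹ := by
            rw [Real.rpow_neg (by positivity), Real.rpow_natCast, ← pow_mul])
  refine le_trans hdy ?_
  have heq : ∀ j ∈ Finset.range (Nat.log 2 (k * (n / 2)) + 1),
      (2:ℝ) ^ ((j + 2) * k) * ((2:ℝ) ^ (j * k))⁻¹ = 4 ^ k := by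
    intro j _
    have h1 : (2:ℝ) ^ ((j + 2) * k) = (2:ℝ) ^ (j * k) * (2:ℝ) ^ (2 * k) := by
      rw [← pow_add]; ring_nf
    have h4 : (4:ℝ) ^ k = 2 ^ (2 * k) := by
      rw [show (4:ℝ) = 2 ^ 2 by norm_num, ← pow_mul]
    have h2 : ((2:ℝ) ^ (j * k)) ≠ 0 := by positivity
    rw [h1, h4]
    field_simp
  rw [Finset.sum_congr rfl heq, Finset.sum_const, Finset.card_range, nsmul_eq_mul]
  push_cast
  exact le_refl _

lemma sum_T2 {n k : ℕ} (hn : 2 ≤ n) (hk : 1 ≤ k) (u : Node n k) (s : ℝ)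
    (hs0 : 0 ≤ s) (hsk : s ≤ (k:ℝ)) :
    ∑ v ∈ others n k u, (dM n k u v : ℝ) ^ (1 - s) ≤
      ((Nat.log 2 (k * (n / 2)) : ℝ) + 1) * 2 ^ (2 * k + 1) *
        ((k * (n / 2) : ℕ) : ℝ) ^ ((k:ℝ) + 1 - s) := by
  have hdy := dyadic hn hk u (fun d => (d : ℝ) ^ (1 - s))
    (fun j => 2 * ((2:ℝ) ^ j) ^ (1 - s))
    (fun j => by positivity)
    (by
      intro j d h1 h2
      have h2j : (2:ℝ) ^ j ≤ (d:ℝ) := by exact_mod_cast h1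
      have h2j' : (d:ℝ) ≤ (2:ℝ) ^ (j + 1) := by
        have : d ≤ 2 ^ (j+1) := le_of_lt h2
        exact_mod_cast this
      rcases le_or_gt s 1 with hcase | hcase
      · calc (d:ℝ) ^ (1 - s) ≤ ((2:ℝ) ^ (j+1)) ^ (1 - s) :=
              Real.rpow_le_rpow (by positivity) h2j' (by linarith)
        _ = (2 : ℝ) ^ (1 - s) * ((2:ℝ) ^ j) ^ (1 - s) := by
              rw [pow_succ, mul_comm ((2:ℝ)^j) 2, Real.mul_rpow (by norm_num) (by positivity)]
        _ ≤ 2 * ((2:ℝ) ^ j) ^ (1 - s) := by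
              have : (2:ℝ) ^ (1 - s) ≤ (2:ℝ) ^ (1:ℝ) :=
                Real.rpow_le_rpow_of_exponent_le (by norm_num) (by linarith)
              rw [Real.rpow_one] at this
              exact mul_le_mul_of_nonneg_right this (by positivity)
      · calc (d:ℝ) ^ (1 - s) ≤ ((2:ℝ) ^ j) ^ (1 - s) :=
              Real.rpow_le_rpow_of_nonpos (by positivity) h2j (by linarith)
        _ ≤ 2 * ((2:ℝ) ^ j) ^ (1 - s) := by
              have : (0:ℝ) ≤ ((2:ℝ) ^ j) ^ (1 - s) := by positivity
              linarith)
  refine le_trans hdy ?_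
  have hterm : ∀ j ∈ Finset.range (Nat.log 2 (k * (n / 2)) + 1),
      (2:ℝ) ^ ((j + 2) * k) * (2 * ((2:ℝ) ^ j) ^ (1 - s)) ≤
        2 ^ (2 * k + 1) * ((k * (n / 2) : ℕ) : ℝ) ^ ((k:ℝ) + 1 - s) := by
    intro j hj
    have hC : ((2:ℝ) ^ j) ^ ((k:ℝ)) = 2 ^ (j * k) := by
      rw [Real.rpow_natCast, ← pow_mul]
    have hpow : (2:ℝ) ^ ((j + 2) * k) * (2 * ((2:ℝ) ^ j) ^ (1 - s)) =
        2 ^ (2 * k + 1) * (((2:ℝ) ^ j) ^ ((k:ℝ)) * ((2:ℝ) ^ j) ^ (1 - s)) := by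
      rw [hC, show (j + 2) * k = j * k + 2 * k by ring, pow_add,
        show 2 * k + 1 = 2 * k + 1 by rfl, pow_succ]
      ring
    have hE : (k:ℝ) + 1 - s = (k:ℝ) + (1 - s) := by ring
    rw [hpow, ← Real.rpow_add (by positivity : (0:ℝ) < (2:ℝ)^j), hE]
    exact mul_le_mul_of_nonneg_left
      (Real.rpow_le_rpow (by positivity) (two_pow_le_ND hn hk hj)
        (by linarith : (0:ℝ) ≤ (k:ℝ) + (1 - s)))
      (by positivity)
  calc _ ≤ ∑ _j ∈ Finset.range (Nat.log 2 (k * (n / 2)) + 1),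
        2 ^ (2 * k + 1) * ((k * (n / 2) : ℕ) : ℝ) ^ ((k:ℝ) + 1 - s) :=
        Finset.sum_le_sum hterm
  _ = _ := by
        rw [Finset.sum_const, Finset.card_range, nsmul_eq_mul]
        push_cast
        ring

lemma sum_T3 {n k : ℕ} (hn : 2 ≤ n) (hk : 1 ≤ k) (u : Node n k) (γ s : ℝ)
    (hγ : 0 < γ) (hγ1 : γ ≤ 1) (hs : (k:ℝ) + γ ≤ s) :
    ∑ v ∈ others n k u, (dM n k u v : ℝ) ^ (1 - s) ≤
      ((Nat.log 2 (k * (n / 2)) : ℝ) + 1) * 4 ^ k *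
        ((k * (n / 2) : ℕ) : ℝ) ^ (1 - γ) := by
  have hk1 : (1:ℝ) ≤ (k:ℝ) := by exact_mod_cast hk
  have hdy := dyadic hn hk u (fun d => (d : ℝ) ^ (1 - s))
    (fun j => ((2:ℝ) ^ j) ^ (1 - (k:ℝ) - γ))
    (fun j => by positivity)
    (by
      intro j d h1 h2
      have hd1 : (1:ℝ) ≤ (d:ℝ) := by
        have : (1:ℕ) ≤ d := le_trans Nat.one_le_two_pow h1
        exact_mod_cast this
      have h2j : (2:ℝ) ^ j ≤ (d:ℝ) := by exact_mod_cast h1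
      calc (d:ℝ) ^ (1 - s) ≤ (d:ℝ) ^ (1 - (k:ℝ) - γ) :=
            Real.rpow_le_rpow_of_exponent_le hd1 (by linarith)
      _ ≤ ((2:ℝ) ^ j) ^ (1 - (k:ℝ) - γ) :=
            Real.rpow_le_rpow_of_nonpos (by positivity) h2j (by linarith))
  refine le_trans hdy ?_
  have hterm : ∀ j ∈ Finset.range (Nat.log 2 (k * (n / 2)) + 1),
      (2:ℝ) ^ ((j + 2) * k) * ((2:ℝ) ^ j) ^ (1 - (k:ℝ) - γ) ≤
        4 ^ k * ((k * (n / 2) : ℕ) : ℝ) ^ (1 - γ) := by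
    intro j hj
    have hC : ((2:ℝ) ^ j) ^ ((k:ℝ)) = 2 ^ (j * k) := by
      rw [Real.rpow_natCast, ← pow_mul]
    have hpow : (2:ℝ) ^ ((j + 2) * k) * ((2:ℝ) ^ j) ^ (1 - (k:ℝ) - γ) =
        4 ^ k * (((2:ℝ) ^ j) ^ ((k:ℝ)) * ((2:ℝ) ^ j) ^ (1 - (k:ℝ) - γ)) := by
      rw [hC, show (4:ℝ) ^ k = 2 ^ (2 * k) by rw [show (4:ℝ) = 2 ^ 2 by norm_num, ← pow_mul],
        show (j + 2) * k = j * k + 2 * k by ring, pow_add]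
      ring
    rw [hpow, ← Real.rpow_add (by positivity : (0:ℝ) < (2:ℝ)^j)]
    have hexp : (k:ℝ) + (1 - (k:ℝ) - γ) = 1 - γ := by ring
    rw [hexp]
    exact mul_le_mul_of_nonneg_left
      (Real.rpow_le_rpow (by positivity) (two_pow_le_ND hn hk hj) (by linarith))
      (by positivity)
  calc _ ≤ ∑ _j ∈ Finset.range (Nat.log 2 (k * (n / 2)) + 1),
        4 ^ k * ((k * (n / 2) : ℕ) : ℝ) ^ (1 - γ) := Finset.sum_le_sum hterm
  _ = _ := by
        rw [Finset.sum_const, Finset.card_range, nsmul_eq_mul]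
        push_cast
        ring



lemma linkProb_nonneg {n k : ℕ} (hn : 2 ≤ n) (hk : 1 ≤ k) (u v : Node n k) (s : ℝ) :
    0 ≤ linkProb n k u v s :=
  div_nonneg (Real.rpow_nonneg (Nat.cast_nonneg _) _) (le_of_lt (cnorm_pos hn hk u s))

/-- The key upper bound on reciprocal link probability. -/
lemma linkProb_le_QB {n k : ℕ} (hn : 3 ≤ n) (hk : 1 ≤ k) (u v : Node n k)
    (hv : v ∈ others n k u) (t : ℝ) (ht : 0 ≤ t) :
    linkProb n k v u t ≤ 2 * (k:ℝ) ^ k * (dM n k u v : ℝ) ^ (-(k:ℝ)) := by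
  have hn2 : 2 ≤ n := by omega
  set d := dM n k u v with hd
  have hd1 : 1 ≤ d := one_le_dM (mem_others.mp hv)
  have hd0 : (0:ℝ) < (d:ℝ) := by exact_mod_cast hd1
  have hdND : d ≤ k * (n / 2) := dM_le n k u v
  set m := min (d / k) ((n - 1) / 2) with hm
  -- box fits
  have h2m1 : 2 * m + 1 ≤ n := by
    have : m ≤ (n - 1) / 2 := min_le_right _ _
    omega
  have hkm : k * m ≤ d := by
    have h1 : m ≤ d / k := min_le_left _ _
    calc k * m ≤ k * (d / k) := Nat.mul_le_mul_left k h1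
    _ ≤ d := Nat.mul_div_le d k
  -- ball B around v of radius d
  set B := (others n k v).filter (fun w => dM n k v w ≤ d) with hB
  have hBcard : (2 * m + 1) ^ k - 1 ≤ B.card := by
    calc (2 * m + 1) ^ k - 1 ≤
        ((others n k v).filter (fun w => dM n k v w ≤ k * m)).card :=
          ball_lower n k m h2m1 v
    _ ≤ B.card := Finset.card_le_card (by
        intro w hw
        rw [Finset.mem_filter] at hw ⊢
        exact ⟨hw.1, le_trans hw.2 hkm⟩)
  -- d ≤ k * (2m+1)
  have hd2m : d ≤ k * (2 * m + 1) := by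
    rcases le_or_gt (d / k) ((n - 1) / 2) with hmin | hmin
    · have hmm : m = d / k := min_eq_left hmin
      have hdiv := Nat.div_add_mod d k
      have hmod := Nat.mod_lt d (show 0 < k by omega)
      have hdist : k * (d / k + 1) = k * (d / k) + k := by ring
      have h1 : d < k * (d / k + 1) := by omega
      have h2 : d / k + 1 ≤ 2 * m + 1 := by omega
      calc d ≤ k * (d / k + 1) := le_of_lt h1
      _ ≤ k * (2 * m + 1) := Nat.mul_le_mul_left k h2
    · have hmm : m = (n - 1) / 2 := min_eq_right (le_of_lt hmin)
      have h2 : n / 2 ≤ 2 * m + 1 := by omega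
      calc d ≤ k * (n / 2) := hdND
      _ ≤ k * (2 * m + 1) := Nat.mul_le_mul_left k h2
  -- real bound on B.card
  have hkey : ((d:ℝ)) ^ (k:ℕ) ≤ 2 * (k:ℝ) ^ k * (B.card : ℝ) := by
    have hdk : ((d:ℝ)) ^ (k:ℕ) ≤ (k:ℝ) ^ k * ((2 * m + 1 : ℕ) : ℝ) ^ (k:ℕ) := by
      rw [← mul_pow]
      apply pow_le_pow_left₀ (le_of_lt hd0)
      exact_mod_cast hd2m
    rcases Nat.eq_zero_or_pos m with hm0 | hm1
    · -- m = 0 : B.card ≥ 1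
      have hBne : 1 ≤ B.card := by
        obtain ⟨w, hwmem, hwd⟩ := exists_neighbor hn2 hk v
        have : w ∈ B := by
          rw [hB, Finset.mem_filter]
          exact ⟨hwmem, by omega⟩
        exact Finset.card_pos.mpr ⟨w, this⟩
      have h1 : ((2 * m + 1 : ℕ) : ℝ) ^ (k:ℕ) = 1 := by
        rw [hm0]; norm_num
      calc ((d:ℝ)) ^ (k:ℕ) ≤ (k:ℝ) ^ k * 1 := by rw [← h1]; exact hdk
      _ ≤ 2 * (k:ℝ) ^ k * (B.card : ℝ) := by
          have h2 : (1:ℝ) ≤ (B.card : ℝ) := by exact_mod_cast hBne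
          have h3 : (0:ℝ) ≤ (k:ℝ) ^ k := by positivity
          nlinarith
    · -- m ≥ 1 : (2m+1)^k ≥ 3 ≥ 2
      have hX2 : (2:ℝ) ≤ ((2 * m + 1 : ℕ) ^ k : ℕ) := by
        have h3 : (3:ℕ) ≤ 2 * m + 1 := by omega
        have : (3:ℕ) ≤ (2 * m + 1) ^ k := by
          calc (3:ℕ) = 3 ^ 1 := by norm_num
          _ ≤ (2 * m + 1) ^ 1 := by simpa using h3
          _ ≤ (2 * m + 1) ^ k := Nat.pow_le_pow_right (by omega) hk
        exact_mod_cast by omega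
      have hBc : (((2 * m + 1) ^ k : ℕ) : ℝ) - 1 ≤ (B.card : ℝ) := by
        have := hBcard
        have h1 : (1:ℕ) ≤ (2 * m + 1) ^ k := Nat.one_le_pow _ _ (by omega)
        push_cast [Nat.cast_sub h1] at this ⊢
        exact_mod_cast this
      have hhalf : (((2 * m + 1) ^ k : ℕ) : ℝ) ≤ 2 * ((((2 * m + 1) ^ k : ℕ) : ℝ) - 1) := by
        linarith
      calc ((d:ℝ)) ^ (k:ℕ) ≤ (k:ℝ) ^ k * ((2 * m + 1 : ℕ) : ℝ) ^ (k:ℕ) := hdk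
      _ = (k:ℝ) ^ k * (((2 * m + 1) ^ k : ℕ) : ℝ) := by push_cast; ring
      _ ≤ (k:ℝ) ^ k * (2 * ((((2 * m + 1) ^ k : ℕ) : ℝ) - 1)) :=
          mul_le_mul_of_nonneg_left hhalf (by positivity)
      _ ≤ 2 * (k:ℝ) ^ k * (B.card : ℝ) := by
          have h3 : (0:ℝ) ≤ (k:ℝ) ^ k := by positivity
          nlinarith
  -- cnorm lower bound
  have hclow : (B.card : ℝ) * (d:ℝ) ^ (-t) ≤ cnorm n k v t := by
    calc (B.card : ℝ) * (d:ℝ) ^ (-t) = B.card • ((d:ℝ) ^ (-t)) := (nsmul_eq_mul _ _).symm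
    _ ≤ ∑ w ∈ B, (dM n k v w : ℝ) ^ (-t) := by
        apply Finset.card_nsmul_le_sum
        intro w hw
        rw [hB, Finset.mem_filter] at hw
        have hw1 : (0:ℝ) < (dM n k v w : ℝ) := by
          exact_mod_cast one_le_dM (mem_others.mp hw.1)
        exact Real.rpow_le_rpow_of_nonpos hw1 (by exact_mod_cast hw.2) (by linarith)
    _ ≤ cnorm n k v t := by
        apply Finset.sum_le_sum_of_subset_of_nonneg (Finset.filter_subset _ _)
        intro w _ _
        exact Real.rpow_nonneg (Nat.cast_nonneg _) _
  -- conclude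
  have hc : 0 < cnorm n k v t := cnorm_pos hn2 hk v t
  have hdvu : dM n k v u = d := by rw [hd, dM_comm]
  rw [linkProb, hdvu, div_le_iff₀ hc]
  set K := 2 * (k:ℝ) ^ k with hK
  have hK0 : (0:ℝ) < K := by positivity
  have hDk1 : (d:ℝ) ^ (-(k:ℝ)) * (d:ℝ) ^ ((k:ℕ):ℝ) = 1 := by
    rw [← Real.rpow_add hd0]
    norm_num
  have hcards : (d:ℝ) ^ ((k:ℕ):ℝ) / K * (d:ℝ) ^ (-t) ≤ cnorm n k v t := by
    refine le_trans ?_ hclow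
    apply mul_le_mul_of_nonneg_right _ (Real.rpow_nonneg (le_of_lt hd0) _)
    rw [div_le_iff₀ hK0, Real.rpow_natCast]
    calc ((d:ℝ)) ^ (k:ℕ) ≤ K * (B.card : ℝ) := hkey
    _ = (B.card : ℝ) * K := by ring
  have e1 : K * (d:ℝ) ^ (-(k:ℝ)) * ((d:ℝ) ^ ((k:ℕ):ℝ) / K * (d:ℝ) ^ (-t)) = (d:ℝ) ^ (-t) := by
    rw [show K * (d:ℝ) ^ (-(k:ℝ)) * ((d:ℝ) ^ ((k:ℕ):ℝ) / K * (d:ℝ) ^ (-t)) =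
      ((d:ℝ) ^ (-(k:ℝ)) * (d:ℝ) ^ ((k:ℕ):ℝ)) * (d:ℝ) ^ (-t) * (K / K) from by ring,
      hDk1, div_self (ne_of_gt hK0)]
    ring
  calc (d:ℝ) ^ (-t) = K * (d:ℝ) ^ (-(k:ℝ)) * ((d:ℝ) ^ ((k:ℕ):ℝ) / K * (d:ℝ) ^ (-t)) := e1.symm
  _ ≤ K * (d:ℝ) ^ (-(k:ℝ)) * cnorm n k v t := by
        apply mul_le_mul_of_nonneg_left hcards
        positivity


lemma rpow_one_sub {d : ℕ} (hd : 1 ≤ d) (s : ℝ) :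
    (d:ℝ) ^ (1 - s) = (d:ℝ) ^ (-s) * (d:ℝ) := by
  have hd0 : (0:ℝ) < (d:ℝ) := by exact_mod_cast hd
  rw [show (1:ℝ) - s = -s + 1 by ring, Real.rpow_add hd0, Real.rpow_one]

lemma linkDist_eq {n k : ℕ} (hn : 2 ≤ n) (hk : 1 ≤ k) (u : Node n k) (s : ℝ) :
    linkDist n k u s = (∑ v ∈ others n k u, (dM n k u v : ℝ) ^ (1 - s)) / cnorm n k u s := by
  unfold linkDist linkProb
  rw [Finset.sum_div]
  apply Finset.sum_congr rfl
  intro v hv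
  rw [rpow_one_sub (one_le_dM (mem_others.mp hv)) s, div_mul_eq_mul_div]

lemma linkDist_nonneg {n k : ℕ} (hn : 2 ≤ n) (hk : 1 ≤ k) (u : Node n k) (s : ℝ) :
    0 ≤ linkDist n k u s := by
  apply Finset.sum_nonneg
  intro v hv
  exact mul_nonneg (linkProb_nonneg hn hk u v s) (Nat.cast_nonneg _)

lemma payoff_le_bound {n k : ℕ} (hn : 3 ≤ n) (hk : 1 ≤ k) (r : Node n k → ℝ)
    (hr : ∀ v, 0 ≤ r v) (u : Node n k) :
    payoff n k r u ≤
      (∑ v ∈ others n k u, (dM n k u v : ℝ) ^ (1 - r u)) *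
        (2 * (k:ℝ) ^ k * ∑ v ∈ others n k u, (dM n k u v : ℝ) ^ (-(r u + (k:ℝ)))) /
          (cnorm n k u (r u)) ^ 2 := by
  have hn2 : 2 ≤ n := by omega
  set s := r u with hs
  have hc := cnorm_pos hn2 hk u s
  have hrec : recip n k r u ≤
      (2 * (k:ℝ) ^ k * ∑ v ∈ others n k u, (dM n k u v : ℝ) ^ (-(s + (k:ℝ)))) /
        cnorm n k u s := by
    unfold recip
    rw [Finset.mul_sum, Finset.sum_div]
    apply Finset.sum_le_sum
    intro v hv
    have h1 : linkProb n k v u (r v) ≤ 2 * (k:ℝ) ^ k * (dM n k u v : ℝ) ^ (-(k:ℝ)) :=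
      linkProb_le_QB hn hk u v hv (r v) (hr v)
    have h2 : linkProb n k u v s ≤ (dM n k u v : ℝ) ^ (-s) / cnorm n k u s := le_of_eq rfl
    have hd0 : (0:ℝ) < (dM n k u v : ℝ) := by
      exact_mod_cast one_le_dM (mem_others.mp hv)
    calc linkProb n k u v s * linkProb n k v u (r v)
        ≤ ((dM n k u v : ℝ) ^ (-s) / cnorm n k u s) *
            (2 * (k:ℝ) ^ k * (dM n k u v : ℝ) ^ (-(k:ℝ))) := by
          apply mul_le_mul_of_nonneg_left h1 (linkProb_nonneg hn2 hk u v s)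
    _ = 2 * (k:ℝ) ^ k * (dM n k u v : ℝ) ^ (-(s + (k:ℝ))) / cnorm n k u s := by
          rw [show -(s + (k:ℝ)) = -s + -(k:ℝ) by ring, Real.rpow_add hd0]
          ring
  have hDist : linkDist n k u s =
      (∑ v ∈ others n k u, (dM n k u v : ℝ) ^ (1 - s)) / cnorm n k u s :=
    linkDist_eq hn2 hk u s
  have hrecnn : 0 ≤ recip n k r u := by
    apply Finset.sum_nonneg
    intro v hv
    exact mul_nonneg (linkProb_nonneg hn2 hk u v s) (linkProb_nonneg hn2 hk v u (r v))
  have hSnn : 0 ≤ (∑ v ∈ others n k u, (dM n k u v : ℝ) ^ (1 - s)) / cnorm n k u s := by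
    apply div_nonneg _ (le_of_lt hc)
    exact Finset.sum_nonneg fun v _ => Real.rpow_nonneg (Nat.cast_nonneg _) _
  calc payoff n k r u = linkDist n k u s * recip n k r u := rfl
  _ ≤ ((∑ v ∈ others n k u, (dM n k u v : ℝ) ^ (1 - s)) / cnorm n k u s) *
      ((2 * (k:ℝ) ^ k * ∑ v ∈ others n k u, (dM n k u v : ℝ) ^ (-(s + (k:ℝ)))) /
        cnorm n k u s) := by
      rw [hDist]
      exact mul_le_mul_of_nonneg_left hrec hSnn
  _ = _ := by
      rw [div_mul_div_comm, sq]

lemma cnorm_nav_le {n k : ℕ} (hn : 2 ≤ n) (hk : 1 ≤ k) (w : Node n k) :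
    cnorm n k w (k:ℝ) ≤ ((Nat.log 2 (k * (n / 2)) : ℝ) + 1) * 4 ^ k := by
  have h := sum_T1 hn hk w 0 (le_refl 0)
  have he : ∀ v ∈ others n k w, (dM n k w v : ℝ) ^ (-((0:ℝ) + (k:ℝ)))
      = (dM n k w v : ℝ) ^ (-(k:ℝ)) := by
    intro v _
    norm_num
  rw [Finset.sum_congr rfl he] at h
  exact h

lemma payoff_nav_ge {n k : ℕ} (hn : 3 ≤ n) (hk : 1 ≤ k) (u : Node n k) :
    ((n ^ k - 1 : ℕ) : ℝ) * ((k * (n / 2) : ℕ) : ℝ) ^ (1 - (k:ℝ)) /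
        (((Nat.log 2 (k * (n / 2)) : ℝ) + 1) * 4 ^ k) ^ 3
      ≤ payoff n k (fun _ => (k:ℝ)) u := by
  have hn2 : 2 ≤ n := by omega
  set Λ := ((Nat.log 2 (k * (n / 2)) : ℝ) + 1) * 4 ^ k with hΛ
  have hΛ1 : (1:ℝ) ≤ Λ := by
    rw [hΛ]
    have h0 : (0:ℝ) ≤ (Nat.log 2 (k * (n / 2)) : ℝ) := Nat.cast_nonneg _
    have h1 : (1:ℝ) ≤ (Nat.log 2 (k * (n / 2)) : ℝ) + 1 := by linarith
    have h2 : (1:ℝ) ≤ (4:ℝ) ^ k := one_le_pow₀ (by norm_num : (1:ℝ) ≤ 4)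
    nlinarith
  have hΛ0 : (0:ℝ) < Λ := by linarith
  have hND1 : (1:ℕ) ≤ k * (n / 2) := ND_pos hn2 hk
  have hND0 : (0:ℝ) < ((k * (n / 2) : ℕ) : ℝ) := by exact_mod_cast hND1
  -- linkDist lower bound
  have hc := cnorm_pos hn2 hk u (k:ℝ)
  have hcup : cnorm n k u (k:ℝ) ≤ Λ := cnorm_nav_le hn2 hk u
  have hnum : ((n ^ k - 1 : ℕ) : ℝ) * ((k * (n / 2) : ℕ) : ℝ) ^ (1 - (k:ℝ)) ≤
      ∑ v ∈ others n k u, (dM n k u v : ℝ) ^ (1 - (k:ℝ)) := by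
    calc ((n ^ k - 1 : ℕ) : ℝ) * ((k * (n / 2) : ℕ) : ℝ) ^ (1 - (k:ℝ))
        = (others n k u).card • (((k * (n / 2) : ℕ) : ℝ) ^ (1 - (k:ℝ))) := by
          rw [card_others, nsmul_eq_mul]
    _ ≤ _ := by
        apply Finset.card_nsmul_le_sum
        intro v hv
        have hd0 : (0:ℝ) < (dM n k u v : ℝ) := by
          exact_mod_cast one_le_dM (mem_others.mp hv)
        apply Real.rpow_le_rpow_of_nonpos hd0 (by exact_mod_cast dM_le n k u v)
        have : (1:ℝ) ≤ (k:ℝ) := by exact_mod_cast hk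
        linarith
  have hnum0 : (0:ℝ) ≤ ((n ^ k - 1 : ℕ) : ℝ) * ((k * (n / 2) : ℕ) : ℝ) ^ (1 - (k:ℝ)) := by
    positivity
  have hD : ((n ^ k - 1 : ℕ) : ℝ) * ((k * (n / 2) : ℕ) : ℝ) ^ (1 - (k:ℝ)) / Λ ≤
      linkDist n k u (k:ℝ) := by
    rw [linkDist_eq hn2 hk u (k:ℝ)]
    apply div_le_div₀ (Finset.sum_nonneg fun v _ => Real.rpow_nonneg (Nat.cast_nonneg _) _)
      hnum hc hcup
  -- recip lower bound
  have hrec : 1 / Λ ^ 2 ≤ recip n k (fun _ => (k:ℝ)) u := by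
    obtain ⟨w, hw, hdw⟩ := exists_neighbor hn2 hk u
    have hterm : linkProb n k u w (k:ℝ) * linkProb n k w u (k:ℝ) ≥ 1 / Λ ^ 2 := by
      have hdwu : dM n k w u = 1 := by rw [dM_comm]; exact hdw
      have h1 : linkProb n k u w (k:ℝ) = 1 / cnorm n k u (k:ℝ) := by
        unfold linkProb
        rw [hdw]
        norm_num
      have h2 : linkProb n k w u (k:ℝ) = 1 / cnorm n k w (k:ℝ) := by
        unfold linkProb
        rw [hdwu]
        norm_num
      rw [h1, h2]
      have hcw := cnorm_pos hn2 hk w (k:ℝ)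
      have hcwup : cnorm n k w (k:ℝ) ≤ Λ := cnorm_nav_le hn2 hk w
      rw [ge_iff_le, div_mul_div_comm, one_mul, sq]
      apply div_le_div₀ (by norm_num) (le_refl 1) (by positivity)
      exact mul_le_mul hcup hcwup (le_of_lt hcw) (le_of_lt hΛ0)
    calc 1 / Λ ^ 2 ≤ linkProb n k u w (k:ℝ) * linkProb n k w u (k:ℝ) := hterm
    _ ≤ recip n k (fun _ => (k:ℝ)) u := by
        apply Finset.single_le_sum
          (f := fun v => linkProb n k u v (k:ℝ) * linkProb n k v u (k:ℝ)) _ hw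
        intro v _
        exact mul_nonneg (linkProb_nonneg hn2 hk u v _) (linkProb_nonneg hn2 hk v u _)
  -- combine
  have h1 : (0:ℝ) ≤ 1 / Λ ^ 2 := by positivity
  calc ((n ^ k - 1 : ℕ) : ℝ) * ((k * (n / 2) : ℕ) : ℝ) ^ (1 - (k:ℝ)) / Λ ^ 3
      = (((n ^ k - 1 : ℕ) : ℝ) * ((k * (n / 2) : ℕ) : ℝ) ^ (1 - (k:ℝ)) / Λ) * (1 / Λ ^ 2) := by
        rw [div_mul_div_comm, mul_one]
        congr 1
        ring
  _ ≤ linkDist n k u (k:ℝ) * recip n k (fun _ => (k:ℝ)) u := by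
        apply mul_le_mul hD hrec h1 (linkDist_nonneg hn2 hk u (k:ℝ))
  _ = payoff n k (fun _ => (k:ℝ)) u := rfl


set_option maxHeartbeats 2000000 in
lemma main_lt {n k g : ℕ} (hk : 1 ≤ k) (hg : 2 ≤ g) (hn : 3 ≤ n)
    (hbig : (2:ℝ) ^ (10 * k + 5) * (k:ℝ) ^ (4 * k) *
        ((Nat.log 2 (k * (n / 2)) : ℝ) + 1) ^ 5 < (n:ℝ) ^ ((g:ℝ)⁻¹))
    (r : Node n k → ℝ) (hr : ∀ v, ∃ m : ℕ, r v = (m : ℝ) * (g:ℝ)⁻¹) (u : Node n k)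
    (hru : r u ≠ (k : ℝ)) :
    payoff n k r u < payoff n k (fun _ => (k:ℝ)) u := by
  have hn2 : 2 ≤ n := by omega
  set γ : ℝ := (g:ℝ)⁻¹ with hγdef
  have hg0 : (0:ℝ) < (g:ℝ) := by exact_mod_cast (by omega : 0 < g)
  have hγ0 : 0 < γ := by positivity
  have hγ1 : γ ≤ 1 := by
    rw [hγdef]
    rw [inv_le_one_iff₀]
    right
    exact_mod_cast (by omega : 1 ≤ g)
  have hginv : (g:ℝ) * γ = 1 := mul_inv_cancel₀ (ne_of_gt hg0)
  have hr0 : ∀ v, 0 ≤ r v := by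
    intro v
    obtain ⟨m, hm⟩ := hr v
    rw [hm]
    positivity
  -- case split on s
  obtain ⟨m, hm⟩ := hr u
  set s := r u with hs
  have hs0 : 0 ≤ s := hr0 u
  have hcase : s ≤ (k:ℝ) - γ ∨ (k:ℝ) + γ ≤ s := by
    rcases lt_trichotomy m (k * g) with h | h | h
    · left
      have h1 : (m:ℝ) ≤ (k:ℝ) * (g:ℝ) - 1 := by
        have : (m:ℝ) + 1 ≤ (k:ℝ) * (g:ℝ) := by exact_mod_cast (by omega : m + 1 ≤ k * g)
        linarith
      have h2 : (m:ℝ) * γ ≤ ((k:ℝ) * (g:ℝ) - 1) * γ :=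
        mul_le_mul_of_nonneg_right h1 (le_of_lt hγ0)
      have h3 : ((k:ℝ) * (g:ℝ) - 1) * γ = (k:ℝ) - γ := by
        have : (k:ℝ) * ((g:ℝ) * γ) = (k:ℝ) := by rw [hginv]; ring
        nlinarith [this]
      rw [hm]
      linarith
    · exfalso
      apply hru
      rw [hm, h]
      push_cast
      rw [mul_assoc]
      rw [show ((g:ℝ)) * (g:ℝ)⁻¹ = 1 from mul_inv_cancel₀ (ne_of_gt hg0)]
      ring
    · right
      have h1 : (k:ℝ) * (g:ℝ) + 1 ≤ (m:ℝ) := by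
        exact_mod_cast (by omega : k * g + 1 ≤ m)
      have h2 : ((k:ℝ) * (g:ℝ) + 1) * γ ≤ (m:ℝ) * γ :=
        mul_le_mul_of_nonneg_right h1 (le_of_lt hγ0)
      have h3 : ((k:ℝ) * (g:ℝ) + 1) * γ = (k:ℝ) + γ := by
        have : (k:ℝ) * ((g:ℝ) * γ) = (k:ℝ) := by rw [hginv]; ring
        nlinarith [this]
      rw [hm]
      linarith
  -- notation
  set J' : ℝ := (Nat.log 2 (k * (n / 2)) : ℝ) + 1 with hJ'def
  set ND : ℝ := ((k * (n / 2) : ℕ) : ℝ) with hNDdef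
  set N : ℝ := ((n ^ k - 1 : ℕ) : ℝ) with hNdef
  set Λ : ℝ := J' * 4 ^ k with hΛdef
  set KN : ℝ := (k:ℝ) * (n:ℝ) with hKNdef
  have hJ'1 : (1:ℝ) ≤ J' := by
    rw [hJ'def]
    have : (0:ℝ) ≤ (Nat.log 2 (k * (n / 2)) : ℝ) := Nat.cast_nonneg _
    linarith
  have hND1 : (1:ℝ) ≤ ND := by
    rw [hNDdef]
    exact_mod_cast ND_pos hn2 hk
  have hND0 : (0:ℝ) < ND := by linarith
  have hk1 : (1:ℝ) ≤ (k:ℝ) := by exact_mod_cast hk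
  have hn1 : (1:ℝ) ≤ (n:ℝ) := by exact_mod_cast (by omega : 1 ≤ n)
  have hKN1 : (1:ℝ) ≤ KN := by rw [hKNdef]; nlinarith
  have hKN0 : (0:ℝ) < KN := by linarith
  have hNDKN : ND ≤ KN := by
    rw [hNDdef, hKNdef]
    have h1 : k * (n / 2) ≤ k * n := Nat.mul_le_mul_left k (Nat.div_le_self n 2)
    calc ((k * (n / 2) : ℕ) : ℝ) ≤ ((k * n : ℕ) : ℝ) := by exact_mod_cast h1
    _ = (k:ℝ) * (n:ℝ) := by push_cast; ring
  have hnKN : (n:ℝ) ≤ KN := by rw [hKNdef]; nlinarith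
  have hnk2 : (2:ℝ) ≤ (n:ℝ) ^ k := by
    have h1 : (n:ℕ) ≤ n ^ k := Nat.le_self_pow (by omega) n
    have h2 : (2:ℕ) ≤ n ^ k := by omega
    exact_mod_cast h2
  have hNge : (n:ℝ) ^ k / 2 ≤ N := by
    rw [hNdef]
    have h1 : (1:ℕ) ≤ n ^ k := Nat.one_le_pow _ _ (by omega)
    push_cast [Nat.cast_sub h1]
    linarith
  have hN0 : (0:ℝ) < N := by linarith
  have hnγ : (0:ℝ) < (n:ℝ) ^ γ := Real.rpow_pos_of_pos (by linarith) γ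
  have hΛ0 : (0:ℝ) < Λ := by rw [hΛdef]; positivity
  -- generic bound ND^e ≤ k^p n^p (n^γ)⁻¹ whenever 0 ≤ e ≤ p - γ
  have hNDpow : ∀ (e : ℝ) (p : ℕ), 0 ≤ e → e ≤ (p:ℝ) - γ →
      ND ^ e ≤ (k:ℝ) ^ p * (n:ℝ) ^ p * ((n:ℝ) ^ γ)⁻¹ := by
    intro e p he0 he1
    have e1 : ND ^ e ≤ KN ^ e := Real.rpow_le_rpow (le_of_lt hND0) hNDKN he0
    have e2 : KN ^ e ≤ KN ^ ((p:ℝ) - γ) := Real.rpow_le_rpow_of_exponent_le hKN1 he1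
    have e3 : KN ^ ((p:ℝ) - γ) = KN ^ ((p:ℕ):ℝ) * KN ^ (-γ) := by
      rw [← Real.rpow_add hKN0, sub_eq_add_neg]
    have e4 : KN ^ ((p:ℕ):ℝ) = (k:ℝ) ^ p * (n:ℝ) ^ p := by
      rw [Real.rpow_natCast, hKNdef, mul_pow]
    have e5 : KN ^ (-γ) ≤ (n:ℝ) ^ (-γ) :=
      Real.rpow_le_rpow_of_nonpos (by linarith) hnKN (by linarith)
    have e6 : (n:ℝ) ^ (-γ) = ((n:ℝ) ^ γ)⁻¹ := Real.rpow_neg (by linarith) γ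
    calc ND ^ e ≤ KN ^ ((p:ℝ) - γ) := le_trans e1 e2
    _ = (k:ℝ) ^ p * (n:ℝ) ^ p * KN ^ (-γ) := by rw [e3, e4]
    _ ≤ (k:ℝ) ^ p * (n:ℝ) ^ p * ((n:ℝ) ^ γ)⁻¹ := by
        rw [← e6]
        exact mul_le_mul_of_nonneg_left e5 (by positivity)
  -- payoff_nav lower bound:
  have hnav : N * ND ^ (1 - (k:ℝ)) / Λ ^ 3 ≤ payoff n k (fun _ => (k:ℝ)) u :=
    payoff_nav_ge hn hk u
  have hS1 := sum_T1 hn2 hk u s hs0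
  rcases hcase with hsA | hsB
  · -- Case A : s ≤ k - γ
    have hsk : s ≤ (k:ℝ) := by linarith
    have hS2 := sum_T2 hn2 hk u s hs0 hsk
    have hclow := cnorm_ge_N hn2 hk u s hs0
    have hc := cnorm_pos hn2 hk u s
    have hcl0 : (0:ℝ) < N * ND ^ (-s) := by positivity
    have hS1nn : (0:ℝ) ≤ ∑ v ∈ others n k u, (dM n k u v : ℝ) ^ (-(s + (k:ℝ))) :=
      Finset.sum_nonneg fun v _ => Real.rpow_nonneg (Nat.cast_nonneg _) _
    have hS2nn : (0:ℝ) ≤ ∑ v ∈ others n k u, (dM n k u v : ℝ) ^ (1 - s) :=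
      Finset.sum_nonneg fun v _ => Real.rpow_nonneg (Nat.cast_nonneg _) _
    have hA : payoff n k r u ≤
        (J' * 2 ^ (2 * k + 1) * ND ^ ((k:ℝ) + 1 - s)) * (2 * (k:ℝ) ^ k * (J' * 4 ^ k)) /
          (N * ND ^ (-s)) ^ 2 := by
      refine le_trans (payoff_le_bound hn hk r hr0 u) ?_
      apply div_le_div₀ (by positivity)
        (mul_le_mul hS2 (mul_le_mul_of_nonneg_left hS1 (by positivity))
          (by positivity) (by positivity))
        (by positivity)
        (pow_le_pow_left₀ (le_of_lt hcl0) hclow 2)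
    -- key numeric inequality
    have hH1 : 2 ^ (2 * k + 2) * (k:ℝ) ^ k * 4 ^ k * J' ^ 2 * ND ^ ((2:ℝ) * (k:ℝ) + s) * Λ ^ 3
        < N ^ 3 := by
      have hndp : ND ^ ((2:ℝ) * (k:ℝ) + s) ≤
          (k:ℝ) ^ (3 * k) * (n:ℝ) ^ (3 * k) * ((n:ℝ) ^ γ)⁻¹ :=
        hNDpow _ (3 * k) (by linarith) (by push_cast; linarith)
      have hΛ3 : Λ ^ 3 = J' ^ 3 * 4 ^ (3 * k) := by
        rw [hΛdef, mul_pow, ← pow_mul, mul_comm k 3]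
      have q4 : (4:ℝ) ^ k = ((2:ℝ) ^ k) ^ 2 := by
        rw [show (4:ℝ) = 2 ^ 2 by norm_num, ← pow_mul, mul_comm 2 k, pow_mul]
      have q43 : (4:ℝ) ^ (3 * k) = ((2:ℝ) ^ k) ^ 6 := by
        rw [mul_comm 3 k, pow_mul, q4, ← pow_mul]
      have q2a : (2:ℝ) ^ (2 * k + 2) = ((2:ℝ) ^ k) ^ 2 * 4 := by
        rw [pow_add, mul_comm 2 k, pow_mul]
        norm_num
      have qk3 : (k:ℝ) ^ (3 * k) = ((k:ℝ) ^ k) ^ 3 := by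
        rw [mul_comm 3 k, pow_mul]
      have qk4 : (k:ℝ) ^ (4 * k) = ((k:ℝ) ^ k) ^ 4 := by
        rw [mul_comm 4 k, pow_mul]
      have q102 : (2:ℝ) ^ (10 * k + 2) = ((2:ℝ) ^ k) ^ 10 * 4 := by
        rw [pow_add, mul_comm 10 k, pow_mul]
        norm_num
      have hconst : (2:ℝ) ^ (2 * k + 2) * (k:ℝ) ^ k * 4 ^ k * 4 ^ (3 * k) * (k:ℝ) ^ (3 * k)
          = (2:ℝ) ^ (10 * k + 2) * (k:ℝ) ^ (4 * k) := by
        rw [q2a, q4, q43, qk3, qk4, q102]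
        ring
      calc 2 ^ (2 * k + 2) * (k:ℝ) ^ k * 4 ^ k * J' ^ 2 * ND ^ ((2:ℝ) * (k:ℝ) + s) * Λ ^ 3
          ≤ 2 ^ (2 * k + 2) * (k:ℝ) ^ k * 4 ^ k * J' ^ 2 *
            ((k:ℝ) ^ (3 * k) * (n:ℝ) ^ (3 * k) * ((n:ℝ) ^ γ)⁻¹) * Λ ^ 3 := by
            apply mul_le_mul_of_nonneg_right _ (by positivity)
            exact mul_le_mul_of_nonneg_left hndp (by positivity)
      _ = (2 ^ (10 * k + 2) * (k:ℝ) ^ (4 * k) * J' ^ 5) * ((n:ℝ) ^ (3 * k) * ((n:ℝ) ^ γ)⁻¹) := by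
            rw [hΛ3, ← hconst]
            ring
      _ < ((n:ℝ) ^ γ / 8) * ((n:ℝ) ^ (3 * k) * ((n:ℝ) ^ γ)⁻¹) := by
            apply mul_lt_mul_of_pos_right _ (by positivity)
            have h8 : (8:ℝ) * (2 ^ (10 * k + 2) * (k:ℝ) ^ (4 * k)) =
                2 ^ (10 * k + 5) * (k:ℝ) ^ (4 * k) := by
              rw [show (8:ℝ) = 2 ^ 3 by norm_num,
                show (2:ℝ) ^ 3 * ((2:ℝ) ^ (10 * k + 2) * (k:ℝ) ^ (4 * k)) =
                  (2:ℝ) ^ (10 * k + 2) * (2:ℝ) ^ 3 * (k:ℝ) ^ (4 * k) from by ring,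
                ← pow_add, show 10 * k + 2 + 3 = 10 * k + 5 from by omega]
            have hb2 : 2 ^ (10 * k + 2) * (k:ℝ) ^ (4 * k) * J' ^ 5 < (n:ℝ) ^ γ / 8 := by
              rw [lt_div_iff₀ (by norm_num : (0:ℝ) < 8)]
              calc 2 ^ (10 * k + 2) * (k:ℝ) ^ (4 * k) * J' ^ 5 * 8
                  = 8 * (2 ^ (10 * k + 2) * (k:ℝ) ^ (4 * k)) * J' ^ 5 := by ring
              _ = 2 ^ (10 * k + 5) * (k:ℝ) ^ (4 * k) * J' ^ 5 := by rw [h8]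
              _ < (n:ℝ) ^ γ := hbig
            exact hb2
      _ ≤ N ^ 3 := by
            have hne : ((n:ℝ) ^ γ) ≠ 0 := ne_of_gt hnγ
            have he : (n:ℝ) ^ γ / 8 * ((n:ℝ) ^ (3 * k) * ((n:ℝ) ^ γ)⁻¹) =
                (n:ℝ) ^ (3 * k) / 8 := by
              field_simp
            rw [he]
            have h1 : ((n:ℝ) ^ k / 2) ^ 3 ≤ N ^ 3 := pow_le_pow_left₀ (by positivity) hNge 3
            have h2 : ((n:ℝ) ^ k / 2) ^ 3 = (n:ℝ) ^ (3 * k) / 8 := by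
              rw [div_pow, ← pow_mul, mul_comm k 3]
              norm_num
            linarith
    -- algebra to conclude
    have hx1 : ND ^ ((k:ℝ) + 1 - s) =
        ND ^ ((2:ℝ) * (k:ℝ) + s) * ND ^ (1 - (k:ℝ)) * (ND ^ (-s) * ND ^ (-s)) := by
      rw [← Real.rpow_add hND0, ← Real.rpow_add hND0, ← Real.rpow_add hND0]
      congr 1
      ring
    have hAY : (J' * 2 ^ (2 * k + 1) * ND ^ ((k:ℝ) + 1 - s)) * (2 * (k:ℝ) ^ k * (J' * 4 ^ k)) /
          (N * ND ^ (-s)) ^ 2 < N * ND ^ (1 - (k:ℝ)) / Λ ^ 3 := by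
      rw [div_lt_div_iff₀ (by positivity) (by positivity)]
      have hpos : (0:ℝ) < ND ^ (1 - (k:ℝ)) * (ND ^ (-s) * ND ^ (-s)) := by positivity
      have hfin := mul_lt_mul_of_pos_right hH1 hpos
      calc (J' * 2 ^ (2 * k + 1) * ND ^ ((k:ℝ) + 1 - s)) * (2 * (k:ℝ) ^ k * (J' * 4 ^ k)) * Λ ^ 3
          = 2 ^ (2 * k + 2) * (k:ℝ) ^ k * 4 ^ k * J' ^ 2 * ND ^ ((2:ℝ) * (k:ℝ) + s) * Λ ^ 3 *
            (ND ^ (1 - (k:ℝ)) * (ND ^ (-s) * ND ^ (-s))) := by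
            rw [hx1]
            ring
      _ < N ^ 3 * (ND ^ (1 - (k:ℝ)) * (ND ^ (-s) * ND ^ (-s))) := hfin
      _ = N * ND ^ (1 - (k:ℝ)) * (N * ND ^ (-s)) ^ 2 := by ring
    calc payoff n k r u ≤ _ := hA
    _ < N * ND ^ (1 - (k:ℝ)) / Λ ^ 3 := hAY
    _ ≤ payoff n k (fun _ => (k:ℝ)) u := hnav
  · -- Case B : k + γ ≤ s
    have hS3 := sum_T3 hn2 hk u γ s hγ0 hγ1 hsB
    have hc1 : (1:ℝ) ≤ cnorm n k u s := one_le_cnorm hn2 hk u s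
    have hS1nn : (0:ℝ) ≤ ∑ v ∈ others n k u, (dM n k u v : ℝ) ^ (-(s + (k:ℝ))) :=
      Finset.sum_nonneg fun v _ => Real.rpow_nonneg (Nat.cast_nonneg _) _
    have hS2nn : (0:ℝ) ≤ ∑ v ∈ others n k u, (dM n k u v : ℝ) ^ (1 - s) :=
      Finset.sum_nonneg fun v _ => Real.rpow_nonneg (Nat.cast_nonneg _) _
    have hB : payoff n k r u ≤
        (J' * 4 ^ k * ND ^ (1 - γ)) * (2 * (k:ℝ) ^ k * (J' * 4 ^ k)) := by
      refine le_trans (payoff_le_bound hn hk r hr0 u) ?_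
      have hnum : (∑ v ∈ others n k u, (dM n k u v : ℝ) ^ (1 - s)) *
          (2 * (k:ℝ) ^ k * ∑ v ∈ others n k u, (dM n k u v : ℝ) ^ (-(s + (k:ℝ)))) ≤
          (J' * 4 ^ k * ND ^ (1 - γ)) * (2 * (k:ℝ) ^ k * (J' * 4 ^ k)) :=
        mul_le_mul hS3 (mul_le_mul_of_nonneg_left hS1 (by positivity))
          (by positivity) (by positivity)
      calc _ ≤ (∑ v ∈ others n k u, (dM n k u v : ℝ) ^ (1 - s)) *
          (2 * (k:ℝ) ^ k * ∑ v ∈ others n k u, (dM n k u v : ℝ) ^ (-(s + (k:ℝ)))) := by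
            apply div_le_self (by positivity)
            nlinarith
      _ ≤ _ := hnum
    have hH2 : (J' * 4 ^ k * ND ^ ((k:ℝ) - γ)) * (2 * (k:ℝ) ^ k * (J' * 4 ^ k)) * Λ ^ 3 < N := by
      have hndp : ND ^ ((k:ℝ) - γ) ≤ (k:ℝ) ^ k * (n:ℝ) ^ k * ((n:ℝ) ^ γ)⁻¹ :=
        hNDpow _ k (by linarith) (by linarith)
      have hΛ3 : Λ ^ 3 = J' ^ 3 * 4 ^ (3 * k) := by
        rw [hΛdef, mul_pow, ← pow_mul, mul_comm k 3]
      have q4 : (4:ℝ) ^ k = ((2:ℝ) ^ k) ^ 2 := by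
        rw [show (4:ℝ) = 2 ^ 2 by norm_num, ← pow_mul, mul_comm 2 k, pow_mul]
      have q43 : (4:ℝ) ^ (3 * k) = ((2:ℝ) ^ k) ^ 6 := by
        rw [mul_comm 3 k, pow_mul, q4, ← pow_mul]
      have qk2 : (k:ℝ) ^ (2 * k) = ((k:ℝ) ^ k) ^ 2 := by
        rw [mul_comm 2 k, pow_mul]
      have q101 : (2:ℝ) ^ (10 * k + 1) = ((2:ℝ) ^ k) ^ 10 * 2 := by
        rw [pow_add, mul_comm 10 k, pow_mul]
        norm_num
      have hconst : (4:ℝ) ^ k * 2 * 4 ^ k * 4 ^ (3 * k) * (k:ℝ) ^ k * (k:ℝ) ^ k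
          = (2:ℝ) ^ (10 * k + 1) * (k:ℝ) ^ (2 * k) := by
        rw [q4, q43, qk2, q101]
        ring
      calc (J' * 4 ^ k * ND ^ ((k:ℝ) - γ)) * (2 * (k:ℝ) ^ k * (J' * 4 ^ k)) * Λ ^ 3
          ≤ (J' * 4 ^ k * ((k:ℝ) ^ k * (n:ℝ) ^ k * ((n:ℝ) ^ γ)⁻¹)) *
            (2 * (k:ℝ) ^ k * (J' * 4 ^ k)) * Λ ^ 3 := by
            apply mul_le_mul_of_nonneg_right _ (by positivity)
            apply mul_le_mul_of_nonneg_right _ (by positivity)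
            exact mul_le_mul_of_nonneg_left hndp (by positivity)
      _ = (2 ^ (10 * k + 1) * (k:ℝ) ^ (2 * k) * J' ^ 5) * ((n:ℝ) ^ k * ((n:ℝ) ^ γ)⁻¹) := by
            rw [hΛ3, ← hconst]
            ring
      _ < ((n:ℝ) ^ γ / 2) * ((n:ℝ) ^ k * ((n:ℝ) ^ γ)⁻¹) := by
            apply mul_lt_mul_of_pos_right _ (by positivity)
            rw [lt_div_iff₀ (by norm_num : (0:ℝ) < 2)]
            have hklek : (k:ℝ) ^ (2 * k) ≤ (k:ℝ) ^ (4 * k) :=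
              pow_le_pow_right₀ hk1 (by omega)
            have h2le : (2:ℝ) ^ (10 * k + 1) * 2 ≤ 2 ^ (10 * k + 5) := by
              rw [show (2:ℝ) ^ (10 * k + 1) * 2 = 2 ^ (10 * k + 2) from by ring]
              apply pow_le_pow_right₀ (by norm_num)
              omega
            have hJnn : (0:ℝ) ≤ J' ^ 5 := by positivity
            calc 2 ^ (10 * k + 1) * (k:ℝ) ^ (2 * k) * J' ^ 5 * 2
                ≤ 2 ^ (10 * k + 5) * (k:ℝ) ^ (4 * k) * J' ^ 5 := by
                  have e1 : (2:ℝ) ^ (10 * k + 1) * (k:ℝ) ^ (2 * k) * J' ^ 5 * 2 =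
                      ((2:ℝ) ^ (10 * k + 1) * 2) * (k:ℝ) ^ (2 * k) * J' ^ 5 := by ring
                  rw [e1]
                  apply mul_le_mul_of_nonneg_right _ hJnn
                  apply mul_le_mul h2le hklek (by positivity) (by positivity)
            _ < (n:ℝ) ^ γ := hbig
      _ ≤ N := by
            have hne : ((n:ℝ) ^ γ) ≠ 0 := ne_of_gt hnγ
            have he : (n:ℝ) ^ γ / 2 * ((n:ℝ) ^ k * ((n:ℝ) ^ γ)⁻¹) = (n:ℝ) ^ k / 2 := by
              field_simp
            rw [he]
            exact hNge
    have hx2 : ND ^ (1 - γ) = ND ^ ((k:ℝ) - γ) * ND ^ (1 - (k:ℝ)) := by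
      rw [← Real.rpow_add hND0]
      congr 1
      ring
    have hBY : (J' * 4 ^ k * ND ^ (1 - γ)) * (2 * (k:ℝ) ^ k * (J' * 4 ^ k)) <
        N * ND ^ (1 - (k:ℝ)) / Λ ^ 3 := by
      rw [lt_div_iff₀ (by positivity)]
      have hpos : (0:ℝ) < ND ^ (1 - (k:ℝ)) := by positivity
      have hfin := mul_lt_mul_of_pos_right hH2 hpos
      calc (J' * 4 ^ k * ND ^ (1 - γ)) * (2 * (k:ℝ) ^ k * (J' * 4 ^ k)) * Λ ^ 3
          = (J' * 4 ^ k * ND ^ ((k:ℝ) - γ)) * (2 * (k:ℝ) ^ k * (J' * 4 ^ k)) * Λ ^ 3 *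
            ND ^ (1 - (k:ℝ)) := by
            rw [hx2]
            ring
      _ < N * ND ^ (1 - (k:ℝ)) := hfin
    calc payoff n k r u ≤ _ := hB
    _ < N * ND ^ (1 - (k:ℝ)) / Λ ^ 3 := hBY
    _ ≤ payoff n k (fun _ => (k:ℝ)) u := hnav


open Filter Asymptotics in
lemma eventually_big (k g : ℕ) (hk : 1 ≤ k) (hg : 2 ≤ g) :
    ∃ n0 : ℕ, ∀ n : ℕ, n0 ≤ n → 3 ≤ n ∧
      (2:ℝ) ^ (10 * k + 5) * (k:ℝ) ^ (4 * k) *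
        ((Nat.log 2 (k * (n / 2)) : ℝ) + 1) ^ 5 < (n:ℝ) ^ ((g:ℝ)⁻¹) := by
  have hg0 : (0:ℝ) < (g:ℝ) := by exact_mod_cast (by omega : 0 < g)
  set γ : ℝ := (g:ℝ)⁻¹ with hγdef
  have hγ0 : 0 < γ := by positivity
  set C : ℝ := (2:ℝ) ^ (10 * k + 5) * (k:ℝ) ^ (4 * k) with hCdef
  have hk0 : (0:ℝ) < (k:ℝ) := by exact_mod_cast hk
  have hC0 : 0 < C := by rw [hCdef]; positivity
  -- littleO machinery
  have hlog : (fun x : ℝ => Real.logb 2 x) =o[atTop] fun x : ℝ => x ^ (γ / 5) := by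
    have h := isLittleO_log_rpow_atTop (show 0 < γ / 5 by positivity)
    have h2 := h.const_mul_left (Real.log 2)⁻¹
    apply h2.congr' _ EventuallyEq.rfl
    filter_upwards with x
    rw [Real.logb, div_eq_inv_mul]
  have hconst : (fun _ : ℝ => Real.logb 2 (k:ℝ) + 1) =o[atTop] fun x : ℝ => x ^ (γ / 5) := by
    apply Asymptotics.isLittleO_const_left.mpr
    right
    have h := tendsto_rpow_atTop (show 0 < γ / 5 by positivity)
    have h2 := tendsto_abs_atTop_atTop.comp h
    apply h2.congr
    intro x
    simp [Real.norm_eq_abs]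
  have h1 : (fun x : ℝ => Real.logb 2 (k:ℝ) + Real.logb 2 x + 1) =o[atTop]
      fun x : ℝ => x ^ (γ / 5) := by
    have := hlog.add hconst
    apply this.congr' _ EventuallyEq.rfl
    filter_upwards with x
    ring
  have h2 : (fun x : ℝ => C * (Real.logb 2 (k:ℝ) + Real.logb 2 x + 1) ^ 5) =o[atTop]
      fun x : ℝ => (x ^ (γ / 5)) ^ 5 :=
    (h1.pow (show 0 < 5 by norm_num)).const_mul_left C
  have h3 : (fun x : ℝ => (x ^ (γ / 5)) ^ 5) =ᶠ[atTop] fun x : ℝ => x ^ γ := by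
    filter_upwards [eventually_ge_atTop (0:ℝ)] with x hx
    rw [← Real.rpow_natCast (x ^ (γ / 5)) 5, ← Real.rpow_mul hx]
    norm_num
  have h4 : (fun x : ℝ => C * (Real.logb 2 (k:ℝ) + Real.logb 2 x + 1) ^ 5) =o[atTop]
      fun x : ℝ => x ^ γ := h2.congr' EventuallyEq.rfl h3
  have h5 := h4.def (show (0:ℝ) < 1/2 by norm_num)
  have h6 : ∀ᶠ x : ℝ in atTop,
      C * (Real.logb 2 (k:ℝ) + Real.logb 2 x + 1) ^ 5 < x ^ γ := by
    filter_upwards [h5, eventually_ge_atTop (1:ℝ)] with x h5x hx1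
    have hx0 : (0:ℝ) < x := by linarith
    have hgpos : 0 < x ^ γ := Real.rpow_pos_of_pos hx0 γ
    rw [Real.norm_eq_abs, Real.norm_eq_abs] at h5x
    have habs : |x ^ γ| = x ^ γ := abs_of_pos hgpos
    calc C * (Real.logb 2 (k:ℝ) + Real.logb 2 x + 1) ^ 5
        ≤ |C * (Real.logb 2 (k:ℝ) + Real.logb 2 x + 1) ^ 5| := le_abs_self _
    _ ≤ 1/2 * |x ^ γ| := h5x
    _ = 1/2 * x ^ γ := by rw [habs]
    _ < x ^ γ := by linarith
  have h7 : ∀ᶠ n : ℕ in atTop,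
      C * (Real.logb 2 (k:ℝ) + Real.logb 2 (n:ℝ) + 1) ^ 5 < (n:ℝ) ^ γ :=
    tendsto_natCast_atTop_atTop.eventually h6
  obtain ⟨n1, hn1⟩ := Filter.eventually_atTop.mp h7
  refine ⟨max n1 3, fun n hn => ⟨le_trans (le_max_right _ _) hn, ?_⟩⟩
  have hn3 : 3 ≤ n := le_trans (le_max_right _ _) hn
  have hnn1 : n1 ≤ n := le_trans (le_max_left _ _) hn
  have hn0 : (0:ℝ) < (n:ℝ) := by exact_mod_cast (by omega : 0 < n)
  have hND1 : (1:ℕ) ≤ k * (n / 2) := ND_pos (by omega) hk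
  have hlogle : ((Nat.log 2 (k * (n / 2)) : ℕ) : ℝ) ≤
      Real.logb 2 (k:ℝ) + Real.logb 2 (n:ℝ) := by
    calc ((Nat.log 2 (k * (n / 2)) : ℕ) : ℝ)
        ≤ Real.logb 2 ((k * (n / 2) : ℕ) : ℝ) := Real.natLog_le_logb _ _
    _ ≤ Real.logb 2 ((k:ℝ) * (n:ℝ)) := by
        apply Real.logb_le_logb_of_le (by norm_num : (1:ℝ) < 2)
          (by exact_mod_cast hND1)
        have h1 : k * (n / 2) ≤ k * n := Nat.mul_le_mul_left k (Nat.div_le_self n 2)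
        calc ((k * (n / 2) : ℕ) : ℝ) ≤ ((k * n : ℕ) : ℝ) := by exact_mod_cast h1
        _ = (k:ℝ) * (n:ℝ) := by push_cast; ring
    _ = Real.logb 2 (k:ℝ) + Real.logb 2 (n:ℝ) :=
        Real.logb_mul (ne_of_gt hk0) (ne_of_gt hn0)
  have hlog0 : (0:ℝ) ≤ ((Nat.log 2 (k * (n / 2)) : ℕ) : ℝ) + 1 := by positivity
  calc C * (((Nat.log 2 (k * (n / 2)) : ℕ) : ℝ) + 1) ^ 5
      ≤ C * (Real.logb 2 (k:ℝ) + Real.logb 2 (n:ℝ) + 1) ^ 5 := by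
        apply mul_le_mul_of_nonneg_left _ (le_of_lt hC0)
        apply pow_le_pow_left₀ hlog0 (by linarith) 5
  _ < (n:ℝ) ^ γ := hn1 n hnn1


end DRB

/-- For sufficiently large `n`, in every valid profile `r` every node
`u` with `r_u ≠ k` gets strictly smaller payoff than its payoff in the navigable
profile `r ≡ k`; consequently `r ≡ k` is a strong Nash equilibrium. -/
theorem navigable_is_strong_nash (k g : ℕ) (hk : 1 ≤ k) (hg : 2 ≤ g) :
    ∃ n0 : ℕ, ∀ n : ℕ, n0 ≤ n →
      (∀ r : DRB.Node n k → ℝ, DRB.ValidProfile n k (g : ℝ)⁻¹ r →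
        ∀ u : DRB.Node n k, r u ≠ (k : ℝ) →
          DRB.payoff n k r u < DRB.payoff n k (fun _ => (k : ℝ)) u) ∧
      DRB.IsStrongNash n k (g : ℝ)⁻¹ (fun _ => (k : ℝ)) := by
  obtain ⟨n0, hn0⟩ := DRB.eventually_big k g hk hg
  refine ⟨n0, fun n hn => ?_⟩
  obtain ⟨hn3, hbig⟩ := hn0 n hn
  have hgne : (g:ℝ) ≠ 0 := by
    have : (0:ℝ) < (g:ℝ) := by exact_mod_cast (by omega : 0 < g)
    exact ne_of_gt this
  have claim1 : ∀ r : DRB.Node n k → ℝ, DRB.ValidProfile n k (g : ℝ)⁻¹ r →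
      ∀ u : DRB.Node n k, r u ≠ (k : ℝ) →
        DRB.payoff n k r u < DRB.payoff n k (fun _ => (k : ℝ)) u := by
    intro r hr u hru
    exact DRB.main_lt hk hg hn3 hbig r (fun v => hr v) u hru
  refine ⟨claim1, ?_⟩
  rintro ⟨Cst, sfn, hCne, hSigma, hge, w, hwC, hwgt⟩
  by_cases hall : ∀ v ∈ Cst, sfn v = (k:ℝ)
  · have heq : (fun v => if v ∈ Cst then sfn v else (fun _ => (k:ℝ)) v)
        = (fun _ : DRB.Node n k => (k:ℝ)) := by
      funext v
      by_cases hv : v ∈ Cst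
      · simp [hv, hall v hv]
      · simp [hv]
    rw [heq] at hwgt
    exact lt_irrefl _ hwgt
  · push_neg at hall
    obtain ⟨v, hvC, hvne⟩ := hall
    set r' : DRB.Node n k → ℝ := fun x => if x ∈ Cst then sfn x else (fun _ => (k:ℝ)) x
      with hr'
    have hvalid : DRB.ValidProfile n k (g : ℝ)⁻¹ r' := by
      intro x
      by_cases hx : x ∈ Cst
      · obtain ⟨m, hm⟩ := hSigma x hx
        exact ⟨m, by simp only [hr', if_pos hx]; exact hm⟩
      · refine ⟨k * g, ?_⟩
        simp only [hr', if_neg hx]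
        push_cast
        field_simp
    have hr'v : r' v ≠ (k:ℝ) := by
      simp only [hr', if_pos hvC]
      exact hvne
    have hlt := DRB.main_lt hk hg hn3 hbig r' (fun x => hvalid x) v hr'v
    have hge' := hge v hvC
    exact absurd hge' (not_le.mpr hlt)
end
end

section
/- For the DRB game on the k-dimensional grid, there exists n0 ∈ ℕ (depending only on k and the granularity γ) such that for all n ≥ n0: the random profile r ≡ 0 is not a 2-strong Nash equilibrium. Specifically, for any pair of grid neighbors u, v (i.e., d_M(u,v) = 1), if the coalition {u, v} jointly deviates to r_u = r_v = k while all other nodes keep strategy 0, then both u and v obtain strictly larger payoff than their payoff in the profile r ≡ 0. -/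
open Finset

noncomputable section

namespace DRBAux

open DRB Real Finset

variable {n k : ℕ}

lemma dM_self (u : Node n k) : dM n k u u = 0 := by
  simp [dM]

lemma dM_comm (u v : Node n k) : dM n k u v = dM n k v u := by
  unfold dM
  exact Finset.sum_congr rfl fun i _ => by omega

lemma natAbs_lt (a b : Fin n) : ((a : ℤ) - (b : ℤ)).natAbs < n := by
  have h1 := a.isLt
  have h2 := b.isLt
  omega

lemma dM_eq_zero {u v : Node n k} (h : dM n k u v = 0) : u = v := by
  funext i
  unfold dM at h
  have hterm := (Finset.sum_eq_zero_iff.mp h) i (Finset.mem_univ i)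
  have hlt := natAbs_lt (u i) (v i)
  have : ((u i : ℤ) - (v i : ℤ)).natAbs = 0 := by omega
  have := u i |>.isLt
  have := v i |>.isLt
  have : (u i : ℕ) = (v i : ℕ) := by omega
  exact Fin.ext this

lemma dM_pos {u v : Node n k} (huv : u ≠ v) : 1 ≤ dM n k u v := by
  rcases Nat.eq_zero_or_pos (dM n k u v) with h | h
  · exact absurd (dM_eq_zero h) huv
  · exact h

lemma dM_le (u v : Node n k) : dM n k u v ≤ k * n := by
  unfold dM
  calc ∑ i, min ((u i : ℤ) - (v i : ℤ)).natAbs (n - ((u i : ℤ) - (v i : ℤ)).natAbs)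
      ≤ ∑ _i : Fin k, n := Finset.sum_le_sum fun i _ => by
        have := natAbs_lt (u i) (v i); omega
    _ = k * n := by simp [mul_comm]

lemma card_others (u : Node n k) : (others n k u).card = n ^ k - 1 := by
  rw [others, Finset.filter_ne', Finset.card_erase_of_mem (Finset.mem_univ u)]
  simp [Finset.card_univ, Fintype.card_fun]

lemma two_le_pow (hn : 2 ≤ n) (hk : 1 ≤ k) : 2 ≤ n ^ k :=
  le_trans hn (by calc n = n ^ 1 := (pow_one n).symm
                    _ ≤ n ^ k := Nat.pow_le_pow_right (by omega) hk)

lemma Nm1_cast (hn : 2 ≤ n) (hk : 1 ≤ k) : ((n ^ k - 1 : ℕ) : ℝ) = (n : ℝ) ^ k - 1 := by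
  have := two_le_pow hn hk
  push_cast [Nat.cast_sub (by omega : 1 ≤ n ^ k)]
  ring

lemma Nm1_pos (hn : 2 ≤ n) (hk : 1 ≤ k) : (0 : ℝ) < (n : ℝ) ^ k - 1 := by
  have h := two_le_pow hn hk
  have : (2 : ℝ) ≤ (n : ℝ) ^ k := by exact_mod_cast h
  linarith

lemma others_nonempty (hn : 2 ≤ n) (hk : 1 ≤ k) (u : Node n k) : (others n k u).Nonempty := by
  rw [← Finset.card_pos, card_others]
  have := two_le_pow hn hk
  omega

lemma mem_others {u v : Node n k} (h : v ≠ u) : v ∈ others n k u := by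
  simp [others, h]

lemma dM_pos_of_mem {u w : Node n k} (hw : w ∈ others n k u) :
    1 ≤ dM n k u w := by
  simp [others] at hw
  exact dM_pos (Ne.symm hw)

lemma cnorm_nonneg (u : Node n k) (s : ℝ) : 0 ≤ cnorm n k u s :=
  Finset.sum_nonneg fun w _ => Real.rpow_nonneg (Nat.cast_nonneg _) _

lemma linkProb_nonneg (u v : Node n k) (s : ℝ) : 0 ≤ linkProb n k u v s :=
  div_nonneg (Real.rpow_nonneg (Nat.cast_nonneg _) _) (cnorm_nonneg u s)

lemma cnorm_zero (hn : 2 ≤ n) (hk : 1 ≤ k) (u : Node n k) :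
    cnorm n k u 0 = (n : ℝ) ^ k - 1 := by
  unfold cnorm
  rw [Finset.sum_congr rfl fun w _ => by rw [neg_zero, Real.rpow_zero]]
  rw [Finset.sum_const, card_others, nsmul_eq_mul, mul_one, Nm1_cast hn hk]

lemma linkProb_zero (hn : 2 ≤ n) (hk : 1 ≤ k) (u v : Node n k) :
    linkProb n k u v 0 = 1 / ((n : ℝ) ^ k - 1) := by
  unfold linkProb
  rw [neg_zero, Real.rpow_zero, cnorm_zero hn hk]

lemma recip_zero (hn : 2 ≤ n) (hk : 1 ≤ k) (u : Node n k) :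
    recip n k (fun _ => (0 : ℝ)) u = 1 / ((n : ℝ) ^ k - 1) := by
  have hpos := Nm1_pos hn hk
  unfold recip
  rw [Finset.sum_congr rfl fun w _ => by
    rw [linkProb_zero hn hk, linkProb_zero hn hk]]
  rw [Finset.sum_const, card_others, nsmul_eq_mul, Nm1_cast hn hk]
  field_simp

lemma linkDist_zero_le (hn : 2 ≤ n) (hk : 1 ≤ k) (u : Node n k) :
    linkDist n k u 0 ≤ (k : ℝ) * n := by
  have hpos := Nm1_pos hn hk
  unfold linkDist
  calc ∑ w ∈ others n k u, linkProb n k u w 0 * (dM n k u w : ℝ)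
      ≤ ∑ w ∈ others n k u, (1 / ((n : ℝ) ^ k - 1)) * ((k : ℝ) * n) := by
        refine Finset.sum_le_sum fun w _ => ?_
        rw [linkProb_zero hn hk]
        have hd : (dM n k u w : ℝ) ≤ (k : ℝ) * n := by
          have := dM_le u w
          exact_mod_cast this
        have : (0:ℝ) ≤ 1 / ((n : ℝ) ^ k - 1) := by positivity
        exact mul_le_mul_of_nonneg_left hd this
    _ = ((n : ℝ) ^ k - 1) * ((1 / ((n : ℝ) ^ k - 1)) * ((k : ℝ) * n)) := by
        rw [Finset.sum_const, card_others, nsmul_eq_mul, Nm1_cast hn hk]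
    _ = (k : ℝ) * n := by field_simp
    
lemma linkDist_nonneg (u : Node n k) (s : ℝ) : 0 ≤ linkDist n k u s :=
  Finset.sum_nonneg fun w _ => mul_nonneg (linkProb_nonneg u w s) (Nat.cast_nonneg _)

lemma payoff_zero_le (hn : 2 ≤ n) (hk : 1 ≤ k) (u : Node n k) :
    payoff n k (fun _ => (0 : ℝ)) u ≤ (k : ℝ) * n / ((n : ℝ) ^ k - 1) := by
  have hpos := Nm1_pos hn hk
  unfold payoff
  rw [recip_zero hn hk]
  calc linkDist n k u ((fun _ => (0:ℝ)) u) * (1 / ((n : ℝ) ^ k - 1))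
      ≤ ((k : ℝ) * n) * (1 / ((n : ℝ) ^ k - 1)) := by
        refine mul_le_mul_of_nonneg_right ?_ (by positivity)
        exact linkDist_zero_le hn hk u
    _ = (k : ℝ) * n / ((n : ℝ) ^ k - 1) := by ring

/-- Folding lemma: summing `f |a - x|` over the cycle is at most twice the sum over a range. -/
lemma sum_fold (f : ℕ → ℝ) (hf : ∀ j, 0 ≤ f j) (a : Fin n) :
    ∑ x : Fin n, f ((a : ℤ) - (x : ℤ)).natAbs ≤ 2 * ∑ j ∈ Finset.range n, f j := by
  classical
  rw [← Finset.sum_filter_add_sum_filter_not Finset.univ (fun x : Fin n => (x : ℕ) ≤ (a : ℕ))]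
  have hH : 0 ≤ ∑ j ∈ Finset.range n, f j := Finset.sum_nonneg fun j _ => hf j
  have half : ∀ (s : Finset (Fin n)) (e : Fin n → ℕ),
      (∀ x ∈ s, ((a : ℤ) - (x : ℤ)).natAbs = e x) →
      (∀ x ∈ s, e x < n) →
      (∀ x ∈ s, ∀ y ∈ s, e x = e y → x = y) →
      ∑ x ∈ s, f ((a : ℤ) - (x : ℤ)).natAbs ≤ ∑ j ∈ Finset.range n, f j := by
    intro s e habs hlt hinj
    calc ∑ x ∈ s, f ((a : ℤ) - (x : ℤ)).natAbs
        = ∑ x ∈ s, f (e x) := Finset.sum_congr rfl fun x hx => by rw [habs x hx]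
      _ = ∑ j ∈ s.image e, f j := (Finset.sum_image hinj).symm
      _ ≤ ∑ j ∈ Finset.range n, f j := by
          refine Finset.sum_le_sum_of_subset_of_nonneg ?_ fun j _ _ => hf j
          intro j hj
          rw [Finset.mem_image] at hj
          obtain ⟨x, hx, rfl⟩ := hj
          exact Finset.mem_range.mpr (hlt x hx)
  have h1 := half (Finset.univ.filter (fun x : Fin n => (x : ℕ) ≤ (a : ℕ)))
    (fun x => (a : ℕ) - (x : ℕ))
    (fun x hx => by
      simp only [Finset.mem_filter] at hx
      show ((a : ℤ) - (x : ℤ)).natAbs = (a : ℕ) - (x : ℕ)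
      omega)
    (fun x hx => by
      show (a : ℕ) - (x : ℕ) < n
      have := a.isLt; omega)
    (fun x hx y hy h => by
      simp only [Finset.mem_filter] at hx hy
      have h' : (a : ℕ) - (x : ℕ) = (a : ℕ) - (y : ℕ) := h
      exact Fin.ext (by omega))
  have h2 := half (Finset.univ.filter (fun x : Fin n => ¬ (x : ℕ) ≤ (a : ℕ)))
    (fun x => (x : ℕ) - (a : ℕ))
    (fun x hx => by
      simp only [Finset.mem_filter] at hx
      show ((a : ℤ) - (x : ℤ)).natAbs = (x : ℕ) - (a : ℕ)
      omega)
    (fun x hx => by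
      show (x : ℕ) - (a : ℕ) < n
      have := x.isLt; omega)
    (fun x hx y hy h => by
      simp only [Finset.mem_filter] at hx hy
      have h' : (x : ℕ) - (a : ℕ) = (y : ℕ) - (a : ℕ) := h
      exact Fin.ext (by omega))
  linarith

/-- One–dimensional harmonic bound for the torus distance. -/
lemma sum_inv_tdist (hn : 1 ≤ n) (a : Fin n) :
    ∑ x : Fin n,
      (((min ((a : ℤ) - (x : ℤ)).natAbs (n - ((a : ℤ) - (x : ℤ)).natAbs) : ℕ) : ℝ) + 1)⁻¹
      ≤ 4 * (1 + Real.log ((n : ℝ) + 1)) := by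
  classical
  set F1 : ℕ → ℝ := fun j => ((j : ℝ) + 1)⁻¹ with hF1
  set F2 : ℕ → ℝ := fun j => (((n - 1 - j : ℕ) : ℝ) + 1)⁻¹ with hF2
  have hF1n : ∀ j, 0 ≤ F1 j := fun j => by positivity
  have hF2n : ∀ j, 0 ≤ F2 j := fun j => by positivity
  have hpt : ∀ x : Fin n,
      (((min ((a : ℤ) - (x : ℤ)).natAbs (n - ((a : ℤ) - (x : ℤ)).natAbs) : ℕ) : ℝ) + 1)⁻¹
      ≤ F1 (((a : ℤ) - (x : ℤ)).natAbs) + F2 (((a : ℤ) - (x : ℤ)).natAbs) := by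
    intro x
    set A := ((a : ℤ) - (x : ℤ)).natAbs with hA
    have hAlt : A < n := natAbs_lt a x
    rcases le_total A (n - A) with h | h
    · have : min A (n - A) = A := min_eq_left h
      rw [this]
      have : (0:ℝ) ≤ F2 A := hF2n A
      simp only [hF1]
      linarith
    · have hmin : min A (n - A) = n - A := min_eq_right h
      rw [hmin]
      have hle : ((n - 1 - A : ℕ) : ℝ) + 1 ≤ ((n - A : ℕ) : ℝ) + 1 := by
        have : (n - 1 - A : ℕ) ≤ (n - A : ℕ) := by omega
        have := Nat.cast_le (α := ℝ).mpr this
        linarith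
      have h1 : (0:ℝ) < ((n - 1 - A : ℕ) : ℝ) + 1 := by positivity
      have h2 := one_div_le_one_div_of_le h1 hle
      simp only [one_div] at h2
      have : (0:ℝ) ≤ F1 A := hF1n A
      simp only [hF2]
      linarith
  have hH : ∑ j ∈ Finset.range n, F1 j ≤ 1 + Real.log ((n : ℝ) + 1) := by
    have hh : ∑ j ∈ Finset.range n, F1 j = ((harmonic n : ℚ) : ℝ) := by
      rw [harmonic]
      push_cast
      rfl
    rw [hh]
    calc ((harmonic n : ℚ) : ℝ) ≤ 1 + Real.log n := harmonic_le_one_add_log n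
      _ ≤ 1 + Real.log ((n : ℝ) + 1) := by
          have : (0:ℝ) < (n : ℝ) := by exact_mod_cast hn
          have := Real.log_le_log this (by linarith : (n:ℝ) ≤ (n:ℝ) + 1)
          linarith
  have hH2 : ∑ j ∈ Finset.range n, F2 j = ∑ j ∈ Finset.range n, F1 j := by
    have := Finset.sum_range_reflect F1 n
    rw [← this]
  calc ∑ x : Fin n,
      (((min ((a : ℤ) - (x : ℤ)).natAbs (n - ((a : ℤ) - (x : ℤ)).natAbs) : ℕ) : ℝ) + 1)⁻¹
      ≤ ∑ x : Fin n, (F1 (((a : ℤ) - (x : ℤ)).natAbs) + F2 (((a : ℤ) - (x : ℤ)).natAbs)) :=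
        Finset.sum_le_sum fun x _ => hpt x
    _ = (∑ x : Fin n, F1 (((a : ℤ) - (x : ℤ)).natAbs))
        + ∑ x : Fin n, F2 (((a : ℤ) - (x : ℤ)).natAbs) := Finset.sum_add_distrib
    _ ≤ 2 * ∑ j ∈ Finset.range n, F1 j + 2 * ∑ j ∈ Finset.range n, F2 j :=
        add_le_add (sum_fold F1 hF1n a) (sum_fold F2 hF2n a)
    _ = 4 * ∑ j ∈ Finset.range n, F1 j := by rw [hH2]; ring
    _ ≤ 4 * (1 + Real.log ((n : ℝ) + 1)) := by linarith

lemma cnorm_k_pos (hn : 2 ≤ n) (hk : 1 ≤ k) (u : Node n k) :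
    0 < cnorm n k u (k : ℝ) := by
  unfold cnorm
  refine Finset.sum_pos (fun w hw => ?_) (others_nonempty hn hk u)
  have := dM_pos_of_mem hw
  exact Real.rpow_pos_of_pos (by exact_mod_cast this : (0:ℝ) < (dM n k u w : ℝ)) _

lemma cnorm_k_le (hn : 2 ≤ n) (hk : 1 ≤ k) (u : Node n k) :
    cnorm n k u (k : ℝ) ≤ (8 * (1 + Real.log ((n : ℝ) + 1))) ^ k := by
  classical
  set L : ℝ := 1 + Real.log ((n : ℝ) + 1) with hL
  have hLpos : (0:ℝ) < L := by
    have : (0:ℝ) ≤ Real.log ((n : ℝ) + 1) := Real.log_nonneg (by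
      have : (0:ℝ) ≤ (n:ℝ) := Nat.cast_nonneg n
      linarith)
    rw [hL]; linarith
  set G : Fin k → Fin n → ℝ := fun i x =>
    (((min ((u i : ℤ) - (x : ℤ)).natAbs (n - ((u i : ℤ) - (x : ℤ)).natAbs) : ℕ) : ℝ) + 1)⁻¹
    with hG
  have hGnn : ∀ i x, 0 ≤ G i x := fun i x => by rw [hG]; positivity
  have step1 : ∀ w ∈ others n k u,
      (dM n k u w : ℝ) ^ (-(k : ℝ)) ≤ 2 ^ k * ∏ i, G i (w i) := by
    intro w hw
    have hd1 : 1 ≤ dM n k u w := dM_pos_of_mem hw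
    set d := dM n k u w with hdd
    have hnat : ∏ i : Fin k,
        ((min ((u i : ℤ) - (w i : ℤ)).natAbs (n - ((u i : ℤ) - (w i : ℤ)).natAbs) : ℕ) + 1)
        ≤ 2 ^ k * d ^ k := by
      have hterm : ∀ i : Fin k,
          (min ((u i : ℤ) - (w i : ℤ)).natAbs (n - ((u i : ℤ) - (w i : ℤ)).natAbs) : ℕ) + 1
          ≤ 2 * d := by
        intro i
        have hle : (min ((u i : ℤ) - (w i : ℤ)).natAbs (n - ((u i : ℤ) - (w i : ℤ)).natAbs) : ℕ) ≤ d := by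
          rw [hdd]
          unfold dM
          exact Finset.single_le_sum (f := fun i =>
            min ((u i : ℤ) - (w i : ℤ)).natAbs (n - ((u i : ℤ) - (w i : ℤ)).natAbs))
            (fun _ _ => Nat.zero_le _) (Finset.mem_univ i)
        omega
      calc ∏ i : Fin k,
          ((min ((u i : ℤ) - (w i : ℤ)).natAbs (n - ((u i : ℤ) - (w i : ℤ)).natAbs) : ℕ) + 1)
          ≤ ∏ _i : Fin k, 2 * d := Finset.prod_le_prod' fun i _ => hterm i
        _ = (2 * d) ^ k := by simp
        _ = 2 ^ k * d ^ k := mul_pow 2 d k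
    have hdp : (0:ℝ) < (d : ℝ) := by exact_mod_cast hd1
    have hrw : (d : ℝ) ^ (-(k : ℝ)) = ((d : ℝ) ^ (k : ℕ))⁻¹ := by
      rw [← Real.rpow_natCast (d : ℝ) k, ← Real.rpow_neg (le_of_lt hdp)]
    rw [hrw]
    set P : ℝ := ∏ i : Fin k,
        (((min ((u i : ℤ) - (w i : ℤ)).natAbs (n - ((u i : ℤ) - (w i : ℤ)).natAbs) : ℕ) : ℝ) + 1)
        with hP
    have hPpos : (0:ℝ) < P := by
      rw [hP]; refine Finset.prod_pos fun i _ => by positivity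
    have hcast : P ≤ 2 ^ k * (d : ℝ) ^ (k : ℕ) := by
      rw [hP]
      exact_mod_cast hnat
    have hGprod : ∏ i, G i (w i) = P⁻¹ := by
      rw [hG, hP, ← Finset.prod_inv_distrib]
    rw [hGprod]
    have h2pos : (0:ℝ) < 2 ^ k := by positivity
    have h1 : P / 2 ^ k ≤ (d : ℝ) ^ (k : ℕ) := by
      rw [div_le_iff₀ h2pos]
      calc P ≤ 2 ^ k * (d : ℝ) ^ (k : ℕ) := hcast
        _ = (d : ℝ) ^ (k : ℕ) * 2 ^ k := mul_comm _ _
    have h2 := one_div_le_one_div_of_le (by positivity : (0:ℝ) < P / 2 ^ k) h1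
    rw [one_div, one_div, inv_div, div_eq_mul_inv] at h2
    exact h2
  have hsub : others n k u ⊆ Finset.univ := Finset.subset_univ _
  calc cnorm n k u (k : ℝ)
      ≤ ∑ w ∈ others n k u, 2 ^ k * ∏ i, G i (w i) := Finset.sum_le_sum step1
    _ ≤ ∑ w : Node n k, 2 ^ k * ∏ i, G i (w i) := by
        refine Finset.sum_le_sum_of_subset_of_nonneg hsub fun w _ _ => ?_
        have : (0:ℝ) ≤ ∏ i, G i (w i) := Finset.prod_nonneg fun i _ => hGnn i (w i)
        positivity
    _ = 2 ^ k * ∑ w : Node n k, ∏ i, G i (w i) := by rw [Finset.mul_sum]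
    _ = 2 ^ k * ∏ i : Fin k, ∑ x : Fin n, G i x := by
        have hps := Finset.prod_univ_sum (fun _ : Fin k => (Finset.univ : Finset (Fin n))) G
        rw [Fintype.piFinset_univ] at hps
        rw [hps]
    _ ≤ 2 ^ k * ∏ _i : Fin k, (4 * L) := by
        refine mul_le_mul_of_nonneg_left ?_ (by positivity)
        refine Finset.prod_le_prod (fun i _ => Finset.sum_nonneg fun x _ => hGnn i x)
          (fun i _ => ?_)
        exact sum_inv_tdist (by omega) (u i)
    _ = (8 * L) ^ k := by
        rw [Finset.prod_const, Finset.card_univ, Fintype.card_fin, ← mul_pow]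
        ring_nf

lemma linkDist_k_ge (hn : 2 ≤ n) (hk : 1 ≤ k) (u : Node n k) :
    ((n : ℝ) ^ k - 1) * ((k : ℝ) * n) ^ ((1 : ℝ) - k) / cnorm n k u (k : ℝ)
      ≤ linkDist n k u (k : ℝ) := by
  have hc := cnorm_k_pos hn hk u
  have hknpos : (0:ℝ) < (k : ℝ) * n := by
    have h1 : (1:ℝ) ≤ (k:ℝ) := by exact_mod_cast hk
    have h2 : (2:ℝ) ≤ (n:ℝ) := by exact_mod_cast hn
    nlinarith
  unfold linkDist linkProb
  have hpt : ∀ w ∈ others n k u,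
      (dM n k u w : ℝ) ^ (-(k : ℝ)) / cnorm n k u (k : ℝ) * (dM n k u w : ℝ)
        = (dM n k u w : ℝ) ^ ((1 : ℝ) - k) / cnorm n k u (k : ℝ) := by
    intro w hw
    have hd1 : 1 ≤ dM n k u w := dM_pos_of_mem hw
    have hdp : (0:ℝ) < (dM n k u w : ℝ) := by exact_mod_cast hd1
    rw [div_mul_eq_mul_div]
    congr 1
    rw [show (1 : ℝ) - (k : ℝ) = -(k : ℝ) + 1 by ring, Real.rpow_add hdp, Real.rpow_one]
  rw [Finset.sum_congr rfl hpt]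
  rw [← Finset.sum_div]
  rw [div_le_div_iff_of_pos_right hc]  -- might need different name
  calc ((n : ℝ) ^ k - 1) * ((k : ℝ) * n) ^ ((1 : ℝ) - k)
      = ∑ _w ∈ others n k u, ((k : ℝ) * n) ^ ((1 : ℝ) - k) := by
        rw [Finset.sum_const, card_others, nsmul_eq_mul, Nm1_cast hn hk]
    _ ≤ ∑ w ∈ others n k u, (dM n k u w : ℝ) ^ ((1 : ℝ) - k) := by
        refine Finset.sum_le_sum fun w hw => ?_
        have hd1 : 1 ≤ dM n k u w := dM_pos_of_mem hw
        have hdp : (0:ℝ) < (dM n k u w : ℝ) := by exact_mod_cast hd1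
        have hdle : (dM n k u w : ℝ) ≤ (k : ℝ) * n := by
          have := dM_le u w; exact_mod_cast this
        have hexp : (1 : ℝ) - k ≤ 0 := by
          have : (1:ℝ) ≤ (k:ℝ) := by exact_mod_cast hk
          linarith
        exact Real.rpow_le_rpow_of_nonpos hdp hdle hexp

lemma recip_k_ge (hn : 2 ≤ n) (hk : 1 ≤ k) {u v : Node n k} (huv : dM n k u v = 1)
    (r : Node n k → ℝ) (hru : r u = (k : ℝ)) (hrv : r v = (k : ℝ)) :
    (cnorm n k u (k : ℝ))⁻¹ * (cnorm n k v (k : ℝ))⁻¹ ≤ recip n k r u := by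
  have hne : v ≠ u := by
    intro h
    rw [h, dM_self] at huv
    omega
  have hvmem : v ∈ others n k u := mem_others hne
  unfold recip
  have hterm : linkProb n k u v (r u) * linkProb n k v u (r v)
      = (cnorm n k u (k : ℝ))⁻¹ * (cnorm n k v (k : ℝ))⁻¹ := by
    unfold linkProb
    rw [hru, hrv, huv, dM_comm v u, huv]
    norm_num [Real.one_rpow]
  calc (cnorm n k u (k : ℝ))⁻¹ * (cnorm n k v (k : ℝ))⁻¹
      = linkProb n k u v (r u) * linkProb n k v u (r v) := hterm.symm
    _ ≤ ∑ w ∈ others n k u, linkProb n k u w (r u) * linkProb n k w u (r w) :=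
        Finset.single_le_sum (f := fun w => linkProb n k u w (r u) * linkProb n k w u (r w))
          (fun w _ => mul_nonneg (linkProb_nonneg u w (r u)) (linkProb_nonneg w u (r w)))
          hvmem

/-- The key comparison: if the numeric inequality holds, deviating to `k`
is strictly better for `u` than the all-zero profile. -/
lemma key_lemma (hn : 2 ≤ n) (hk : 1 ≤ k)
    (hnum : ((k : ℝ) * n) ^ k * ((8 * (1 + Real.log ((n : ℝ) + 1))) ^ k) ^ 3
      < ((n : ℝ) ^ k - 1) ^ 2)
    {u v : Node n k} (huv : dM n k u v = 1) (r : Node n k → ℝ)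
    (hru : r u = (k : ℝ)) (hrv : r v = (k : ℝ)) :
    payoff n k (fun _ => (0 : ℝ)) u < payoff n k r u := by
  set L : ℝ := 1 + Real.log ((n : ℝ) + 1) with hLdef
  set M : ℝ := (8 * L) ^ k with hM
  set c1 := cnorm n k u (k : ℝ) with hc1
  set c2 := cnorm n k v (k : ℝ) with hc2
  have hc1p : 0 < c1 := cnorm_k_pos hn hk u
  have hc2p : 0 < c2 := cnorm_k_pos hn hk v
  have hc1M : c1 ≤ M := cnorm_k_le hn hk u
  have hc2M : c2 ≤ M := cnorm_k_le hn hk v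
  have hMp : 0 < M := lt_of_lt_of_le hc1p hc1M
  have hNm1 : (0:ℝ) < (n : ℝ) ^ k - 1 := Nm1_pos hn hk
  have hknpos : (0:ℝ) < (k : ℝ) * n := by
    have h1 : (1:ℝ) ≤ (k:ℝ) := by exact_mod_cast hk
    have h2 : (2:ℝ) ≤ (n:ℝ) := by exact_mod_cast hn
    nlinarith
  set T : ℝ := ((n : ℝ) ^ k - 1) * ((k : ℝ) * n) ^ ((1 : ℝ) - k) with hT
  have hTpos : 0 < T := by
    rw [hT]
    exact mul_pos hNm1 (Real.rpow_pos_of_pos hknpos _)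
  -- step A : old payoff ≤ kn/Nm1
  have hold := payoff_zero_le hn hk u
  -- step B : kn/Nm1 < T / M^3
  have hB : (k : ℝ) * n / ((n : ℝ) ^ k - 1) < T / M ^ 3 := by
    rw [div_lt_div_iff₀ hNm1 (by positivity)]
    have hmul := mul_lt_mul_of_pos_right hnum
      (Real.rpow_pos_of_pos hknpos ((1 : ℝ) - k))
    have hlhs : ((k : ℝ) * n) ^ k * M ^ 3 * ((k : ℝ) * n) ^ ((1 : ℝ) - k)
        = (k : ℝ) * n * M ^ 3 := by
      rw [mul_right_comm]
      congr 1
      rw [← Real.rpow_natCast ((k : ℝ) * n) k, ← Real.rpow_add hknpos]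
      rw [show (k : ℝ) + ((1 : ℝ) - k) = 1 by ring, Real.rpow_one]
    rw [hM] at hlhs
    rw [hlhs] at hmul
    calc (k : ℝ) * n * M ^ 3 < ((n : ℝ) ^ k - 1) ^ 2 * ((k : ℝ) * n) ^ ((1 : ℝ) - k) := by
          rw [hM]; exact hmul
      _ = T * ((n : ℝ) ^ k - 1) := by rw [hT]; ring
  -- step C : T / M^3 ≤ T / (c1^2 * c2)
  have hC : T / M ^ 3 ≤ T / (c1 ^ 2 * c2) := by
    refine div_le_div_of_nonneg_left hTpos.le (by positivity) ?_
    calc c1 ^ 2 * c2 ≤ M ^ 2 * M := by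
          refine mul_le_mul (by nlinarith) hc2M hc2p.le (by positivity)
      _ = M ^ 3 := by ring
  -- step D : T / (c1^2 * c2) ≤ payoff r u
  have hD : T / (c1 ^ 2 * c2) ≤ payoff n k r u := by
    have hld := linkDist_k_ge hn hk u
    have hrc := recip_k_ge hn hk huv r hru hrv
    have hld0 : (0:ℝ) ≤ T / c1 := by positivity
    have hrc0 : (0:ℝ) ≤ c1⁻¹ * c2⁻¹ := by positivity
    unfold payoff
    rw [hru]
    calc T / (c1 ^ 2 * c2) = (T / c1) * (c1⁻¹ * c2⁻¹) := by
          rw [div_eq_mul_inv, div_eq_mul_inv, pow_two, mul_inv, mul_inv]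
          ring
      _ ≤ linkDist n k u (k : ℝ) * recip n k r u := by
          refine mul_le_mul ?_ hrc hrc0 ?_
          · rw [hT, hc1]; exact linkDist_k_ge hn hk u
          · exact le_trans hld0 (by rw [hT, hc1] at *; exact linkDist_k_ge hn hk u)
  calc payoff n k (fun _ => (0 : ℝ)) u ≤ (k : ℝ) * n / ((n : ℝ) ^ k - 1) := hold
    _ < T / M ^ 3 := hB
    _ ≤ T / (c1 ^ 2 * c2) := hC
    _ ≤ payoff n k r u := hD

lemma sq_div4_le {x : ℝ} (hx : 2 ≤ x) : x ^ 2 / 4 ≤ (x - 1) ^ 2 := by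
  nlinarith [mul_nonneg (show (0:ℝ) ≤ x - 2 by linarith)
    (show (0:ℝ) ≤ 3 * x - 2 by linarith)]

lemma numeric (k : ℕ) (hk : 1 ≤ k) (n : ℕ) (hn : 2 * (702464 * k + 2) ^ 2 ≤ n) :
    ((k : ℝ) * n) ^ k * ((8 * (1 + Real.log ((n : ℝ) + 1))) ^ k) ^ 3
      < ((n : ℝ) ^ k - 1) ^ 2 := by
  have hn2 : 2 ≤ n := by
    have h := Nat.one_le_two_pow (n := 1)
    have h2 : 1 ≤ (702464 * k + 2) ^ 2 := Nat.one_le_pow _ _ (by omega)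
    omega
  set A : ℝ := 702464 * (k : ℝ) + 2 with hA
  have hk1 : (1:ℝ) ≤ (k:ℝ) := by exact_mod_cast hk
  have hApos : (0:ℝ) < A := by rw [hA]; linarith
  have hnge : 2 * A ^ 2 ≤ (n : ℝ) := by
    have : ((2 * (702464 * k + 2) ^ 2 : ℕ) : ℝ) ≤ (n : ℝ) := by exact_mod_cast hn
    push_cast at this
    rw [hA]; linarith
  have h2n : (2:ℝ) ≤ (n : ℝ) := by exact_mod_cast hn2
  have hnpos : (0:ℝ) < (n : ℝ) := by linarith
  set L : ℝ := 1 + Real.log ((n : ℝ) + 1) with hL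
  have hlogn : (0:ℝ) ≤ Real.log ((n : ℝ) + 1) := Real.log_nonneg (by linarith)
  have hLpos : (1:ℝ) ≤ L := by rw [hL]; linarith
  -- L ≤ 7 (n+1)^{1/6}
  set rp : ℝ := ((n : ℝ) + 1) ^ ((1 : ℝ) / 6) with hrp
  have hrp_pos : 0 < rp := Real.rpow_pos_of_pos (by linarith) _
  have hrp_ge1 : (1:ℝ) ≤ rp := Real.one_le_rpow (by linarith) (by norm_num)
  have hlog6 : Real.log ((n : ℝ) + 1) ≤ 6 * rp := by
    have h1 := Real.log_le_sub_one_of_pos hrp_pos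
    rw [hrp, Real.log_rpow (by linarith : (0:ℝ) < (n : ℝ) + 1)] at h1
    have : (1 : ℝ) / 6 * Real.log ((n : ℝ) + 1) ≤ rp - 1 := by rw [hrp]; exact h1
    linarith
  have hL7 : L ≤ 7 * rp := by rw [hL]; linarith
  have hL3 : L ^ 3 ≤ 343 * ((n : ℝ) + 1) ^ ((1 : ℝ) / 2) := by
    have h1 : L ^ 3 ≤ (7 * rp) ^ 3 := by
      refine pow_le_pow_left₀ (by linarith) hL7 3
    have h2 : (7 * rp) ^ 3 = 343 * rp ^ (3 : ℕ) := by ring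
    have h3 : rp ^ (3 : ℕ) = ((n : ℝ) + 1) ^ ((1 : ℝ) / 2) := by
      rw [hrp, ← Real.rpow_natCast (((n : ℝ) + 1) ^ ((1 : ℝ) / 6)) 3,
        ← Real.rpow_mul (by linarith : (0:ℝ) ≤ (n : ℝ) + 1)]
      norm_num
    rw [h2, h3] at h1
    exact h1
  -- sqrt bound : (n+1)^{1/2} < n / A
  have hsqrt : ((n : ℝ) + 1) ^ ((1 : ℝ) / 2) < (n : ℝ) / A := by
    rw [← Real.sqrt_eq_rpow]
    rw [Real.sqrt_lt' (by positivity : (0:ℝ) < (n : ℝ) / A)]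
    rw [div_pow]
    rw [lt_div_iff₀ (by positivity : (0:ℝ) < A ^ 2)]
    have h1 : 2 * A ^ 2 * (n:ℝ) ≤ (n:ℝ) ^ 2 := by nlinarith
    have hA2 : (1:ℝ) ≤ A ^ 2 := by nlinarith
    nlinarith
  -- main scalar bound : 2048 k L^3 < n
  have hC : 2048 * (k : ℝ) * L ^ 3 < (n : ℝ) := by
    have h1 : 2048 * (k : ℝ) * L ^ 3 ≤ 2048 * (k : ℝ) * (343 * ((n : ℝ) + 1) ^ ((1 : ℝ) / 2)) := by
      refine mul_le_mul_of_nonneg_left hL3 (by positivity)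
    have h2 : 2048 * (k : ℝ) * (343 * ((n : ℝ) + 1) ^ ((1 : ℝ) / 2))
        < 2048 * (k : ℝ) * (343 * ((n : ℝ) / A)) := by
      refine mul_lt_mul_of_pos_left ?_ (by positivity)
      exact mul_lt_mul_of_pos_left hsqrt (by norm_num)
    have h3 : 2048 * (k : ℝ) * (343 * ((n : ℝ) / A)) = 702464 * (k : ℝ) * (n : ℝ) / A := by
      ring
    have h4 : 702464 * (k : ℝ) * (n : ℝ) / A < (n : ℝ) := by
      rw [div_lt_iff₀ hApos]
      have : 702464 * (k : ℝ) < A := by rw [hA]; linarith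
      nlinarith
    have h5 : 2048 * (k : ℝ) * (343 * ((n : ℝ) + 1) ^ ((1 : ℝ) / 2)) < (n : ℝ) := by
      calc 2048 * (k : ℝ) * (343 * ((n : ℝ) + 1) ^ ((1 : ℝ) / 2))
          < 2048 * (k : ℝ) * (343 * ((n : ℝ) / A)) := h2
        _ = 702464 * (k : ℝ) * (n : ℝ) / A := h3
        _ < (n : ℝ) := h4
    exact lt_of_le_of_lt h1 h5
  -- now assemble
  have hL0 : (0:ℝ) ≤ L := by linarith
  have hx : (2:ℝ) ≤ (n : ℝ) ^ k := by
    calc (2:ℝ) ≤ (n : ℝ) := by exact_mod_cast hn2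
      _ = (n : ℝ) ^ 1 := (pow_one _).symm
      _ ≤ (n : ℝ) ^ k := pow_le_pow_right₀ (by linarith) hk
  have hLHS : ((k : ℝ) * n) ^ k * ((8 * L) ^ k) ^ 3 = (512 * (k : ℝ) * (n : ℝ) * L ^ 3) ^ k := by
    rw [← pow_mul, show k * 3 = 3 * k by ring, pow_mul, ← mul_pow]
    congr 1
    ring
  have hstep2 : 512 * (k : ℝ) * (n : ℝ) * L ^ 3 < (n : ℝ) ^ 2 / 4 := by
    have := mul_lt_mul_of_pos_right hC (show (0:ℝ) < (n:ℝ) / 4 by positivity)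
    calc 512 * (k : ℝ) * (n : ℝ) * L ^ 3 = 2048 * (k : ℝ) * L ^ 3 * ((n:ℝ) / 4) := by ring
      _ < (n : ℝ) * ((n:ℝ) / 4) := this
      _ = (n : ℝ) ^ 2 / 4 := by ring
  have hstep3 : (512 * (k : ℝ) * (n : ℝ) * L ^ 3) ^ k < ((n : ℝ) ^ 2 / 4) ^ k := by
    refine pow_lt_pow_left₀ hstep2 (by positivity) (by omega)
  have hstep4 : ((n : ℝ) ^ 2 / 4) ^ k ≤ ((n : ℝ) ^ k) ^ 2 / 4 := by
    rw [div_pow, pow_right_comm]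
    refine div_le_div_of_nonneg_left (by positivity) (by norm_num) ?_
    calc (4:ℝ) = 4 ^ 1 := (pow_one 4).symm
      _ ≤ 4 ^ k := pow_le_pow_right₀ (by norm_num) hk
  have hstep5 : ((n : ℝ) ^ k) ^ 2 / 4 ≤ ((n : ℝ) ^ k - 1) ^ 2 := sq_div4_le hx
  calc ((k : ℝ) * n) ^ k * ((8 * L) ^ k) ^ 3
      = (512 * (k : ℝ) * (n : ℝ) * L ^ 3) ^ k := hLHS
    _ < ((n : ℝ) ^ 2 / 4) ^ k := hstep3
    _ ≤ ((n : ℝ) ^ k) ^ 2 / 4 := hstep4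
    _ ≤ ((n : ℝ) ^ k - 1) ^ 2 := hstep5

lemma neighbor_exists (hn : 2 ≤ n) (hk : 1 ≤ k) :
    ∃ u v : Node n k, dM n k u v = 1 := by
  have hkpos : 0 < k := hk
  have h1n : 1 < n := by omega
  have h0n : 0 < n := by omega
  refine ⟨fun _ => ⟨0, h0n⟩, Function.update (fun _ => ⟨0, h0n⟩) ⟨0, hkpos⟩ ⟨1, h1n⟩, ?_⟩
  unfold dM
  rw [Finset.sum_eq_single (⟨0, hkpos⟩ : Fin k)]
  · rw [Function.update_self]
    simp
    omega
  · intro i _ hi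
    rw [Function.update_of_ne hi]
    simp
  · intro h
    exact absurd (Finset.mem_univ _) h
end DRBAux


/-- For sufficiently large `n`, the random profile `r ≡ 0` is not a
2-strong Nash equilibrium: any pair of grid neighbors `u, v` (with
`d_M(u,v) = 1`) that jointly deviates to strategy `k` makes both strictly better
off. -/
theorem random_not_two_strong_nash (k g : ℕ) (hk : 1 ≤ k) (hg : 2 ≤ g) :
    ∃ n0 : ℕ, ∀ n : ℕ, n0 ≤ n →
      ¬ DRB.IsTStrongNash n k (g : ℝ)⁻¹ 2 (fun _ => (0 : ℝ)) ∧
      ∀ u v : DRB.Node n k, DRB.dM n k u v = 1 →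
        DRB.payoff n k
            (Function.update (Function.update (fun _ => (0 : ℝ)) u (k : ℝ)) v (k : ℝ)) u >
          DRB.payoff n k (fun _ => (0 : ℝ)) u ∧
        DRB.payoff n k
            (Function.update (Function.update (fun _ => (0 : ℝ)) u (k : ℝ)) v (k : ℝ)) v >
          DRB.payoff n k (fun _ => (0 : ℝ)) v := by
  classical
  refine ⟨2 * (702464 * k + 2) ^ 2, fun n hn => ?_⟩
  have hn2 : 2 ≤ n := by
    have h2 : 1 ≤ (702464 * k + 2) ^ 2 := Nat.one_le_pow _ _ (by omega)
    omega
  have hnum := DRBAux.numeric k hk n hn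
  have hb : ∀ u v : DRB.Node n k, DRB.dM n k u v = 1 →
      DRB.payoff n k
          (Function.update (Function.update (fun _ => (0 : ℝ)) u (k : ℝ)) v (k : ℝ)) u >
        DRB.payoff n k (fun _ => (0 : ℝ)) u ∧
      DRB.payoff n k
          (Function.update (Function.update (fun _ => (0 : ℝ)) u (k : ℝ)) v (k : ℝ)) v >
        DRB.payoff n k (fun _ => (0 : ℝ)) v := by
    intro u v huv
    have hune : u ≠ v := by
      intro h
      rw [h, DRBAux.dM_self] at huv
      omega
    set R := Function.update (Function.update (fun _ => (0 : ℝ)) u (k : ℝ)) v (k : ℝ) with hR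
    have hRu : R u = (k : ℝ) := by
      rw [hR, Function.update_of_ne hune, Function.update_self]
    have hRv : R v = (k : ℝ) := by rw [hR, Function.update_self]
    constructor
    · exact DRBAux.key_lemma hn2 hk hnum huv R hRu hRv
    · refine DRBAux.key_lemma hn2 hk hnum ?_ R hRv hRu
      rw [DRBAux.dM_comm v u]
      exact huv
  refine ⟨?_, hb⟩
  intro hSN
  obtain ⟨u0, v0, hd⟩ := DRBAux.neighbor_exists hn2 hk
  have hune : u0 ≠ v0 := by
    intro h
    rw [h, DRBAux.dM_self] at hd
    omega
  obtain ⟨hpu, hpv⟩ := hb u0 v0 hd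
  set C : Finset (DRB.Node n k) := {u0, v0} with hC
  set R := Function.update (Function.update (fun _ => (0 : ℝ)) u0 (k : ℝ)) v0 (k : ℝ) with hR
  have hprof : (fun w => if w ∈ C then (fun _ => (k : ℝ)) w else (fun _ => (0 : ℝ)) w) = R := by
    funext w
    by_cases hw : w = v0
    · simp [hC, hR, hw, Function.update_self]
    · by_cases hw2 : w = u0
      · simp [hC, hR, hw, hw2, Function.update_of_ne hune, Function.update_self]
      · simp [hC, hR, hw, hw2, Function.update_of_ne hw, Function.update_of_ne hw2]
  refine hSN ⟨C, fun _ => (k : ℝ), ⟨u0, by simp [hC]⟩, ?_, ?_, ?_, ?_⟩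
  · calc C.card ≤ ({v0} : Finset (DRB.Node n k)).card + 1 := Finset.card_insert_le _ _
      _ ≤ 2 := by simp
  · intro w _
    refine ⟨k * g, ?_⟩
    have hg0 : (g : ℝ) ≠ 0 := by
      have : (2:ℝ) ≤ (g:ℝ) := by exact_mod_cast hg
      linarith
    push_cast
    field_simp
  · intro w hw
    rw [hprof]
    rw [hC, Finset.mem_insert, Finset.mem_singleton] at hw
    rcases hw with rfl | rfl
    · exact le_of_lt hpu
    · exact le_of_lt hpv
  · refine ⟨u0, by simp [hC], ?_⟩
    rw [hprof]
    exact hpu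
end
end
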